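/- arXiv:1402.2119 — 5 statements merged into one kernel-verified Lean document; each statement's English description precedes it below -/
import Mathlib

section
/- The map ζ sending a graph G to the graph G with vertex n and all its incident edges removed is a bijection from B^Δ[n] (two-connected graphs on [n] in which vertex n is adjacent to all other vertices) onto the set of connected graphs on [n-1]. -/
open scoped Classical

/-- A graph is two-connected if it is connected and remains connected after
deleting any single vertex (and its incident edges). -/
def TwoConnected {V : Type*} (G : SimpleGraph V) : Prop :=
  G.Connected ∧ ∀ v : V, (G.induce ({v}ᶜ : Set V)).Connected

lemma connected_of_hub {V : Type*} (G : SimpleGraph V) (h : V)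
    (hadj : ∀ v, v ≠ h → G.Adj h v) : G.Connected := by
  have reach : ∀ a, G.Reachable h a := by
    intro a
    by_cases ha : a = h
    · subst ha; exact SimpleGraph.Reachable.refl _
    · exact (hadj a ha).reachable
  haveI : Nonempty V := ⟨h⟩
  exact SimpleGraph.Connected.mk fun a b => (reach a).symm.trans (reach b)

/-- The iso between the comap along `castSucc` and the induced graph on the
complement of the last vertex. -/
def zetaIso (n : ℕ) (G : SimpleGraph (Fin (n + 1))) :
    (G.comap (Fin.castSucc : Fin n → Fin (n + 1))) ≃g
      (G.induce ({Fin.last n}ᶜ : Set (Fin (n + 1)))) where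
  toFun i := ⟨i.castSucc, by simp [Fin.ne_of_lt (Fin.castSucc_lt_last i)]⟩
  invFun x := (x : Fin (n + 1)).castPred (Set.mem_compl_singleton_iff.mp x.2)
  left_inv i := by simp
  right_inv x := by ext; simp
  map_rel_iff' := by intro i j; simp [SimpleGraph.comap_adj]; exact Iff.rfl

/-- The cone over a graph: add a new last vertex adjacent to everything. -/
def cone (n : ℕ) (H : SimpleGraph (Fin n)) : SimpleGraph (Fin (n + 1)) where
  Adj a b := a ≠ b ∧ (a = Fin.last n ∨ b = Fin.last n ∨
    ∃ i j : Fin n, a = i.castSucc ∧ b = j.castSucc ∧ H.Adj i j)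
  symm := by
    constructor
    rintro a b ⟨hab, h | h | ⟨i, j, hi, hj, hij⟩⟩
    · exact ⟨hab.symm, Or.inr (Or.inl h)⟩
    · exact ⟨hab.symm, Or.inl h⟩
    · exact ⟨hab.symm, Or.inr (Or.inr ⟨j, i, hj, hi, hij.symm⟩)⟩
  loopless := ⟨fun a => by rintro ⟨h, -⟩; exact h rfl⟩

/-- The map `ζ` sending a two-connected graph `G` on `[n+1]` in which the last
vertex is adjacent to all other vertices to the graph obtained by deleting the
last vertex and its incident edges is a bijection onto the connected graphs on
`[n]`. -/
theorem zeta_bijection (n : ℕ) (hn : 2 ≤ n) :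
    Set.BijOn (fun G : SimpleGraph (Fin (n + 1)) => G.comap (Fin.castSucc : Fin n → Fin (n + 1)))
      {G : SimpleGraph (Fin (n + 1)) |
        TwoConnected G ∧ ∀ i : Fin n, G.Adj (Fin.last n) i.castSucc}
      {H : SimpleGraph (Fin n) | H.Connected} := by
  constructor
  · -- MapsTo
    intro G hG
    exact (zetaIso n G).connected_iff.mpr (hG.1.2 (Fin.last n))
  constructor
  · -- InjOn
    intro G1 hG1 G2 hG2 h
    simp only at h
    ext a b
    by_cases ha : a = Fin.last n
    · subst ha
      by_cases hb : b = Fin.last n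
      · subst hb; simp
      · have : b = (b.castPred hb).castSucc := by simp
        rw [this]
        exact iff_of_true (hG1.2 _) (hG2.2 _)
    · by_cases hb : b = Fin.last n
      · subst hb
        have : a = (a.castPred ha).castSucc := by simp
        rw [this]
        exact iff_of_true ((hG1.2 _).symm) ((hG2.2 _).symm)
      · have h1 : a = (a.castPred ha).castSucc := by simp
        have h2 : b = (b.castPred hb).castSucc := by simp
        rw [h1, h2]
        have := congrArg (fun K : SimpleGraph (Fin n) => K.Adj (a.castPred ha) (b.castPred hb)) h
        simpa [SimpleGraph.comap_adj] using this
  · -- SurjOn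
    intro H hH
    refine ⟨cone n H, ⟨⟨?_, ?_⟩, ?_⟩, ?_⟩
    · exact connected_of_hub _ (Fin.last n) fun v hv => ⟨Ne.symm hv, Or.inl rfl⟩
    · intro v
      by_cases hv : v = Fin.last n
      · subst hv
        refine (zetaIso n (cone n H)).symm.connected_iff.mpr ?_
        have hc : (cone n H).comap (Fin.castSucc : Fin n → Fin (n + 1)) = H := by
          ext i j
          simp only [SimpleGraph.comap_adj, cone]
          constructor
          · rintro ⟨hne, h | h | ⟨i', j', hi, hj, hij⟩⟩
            · exact absurd h (Fin.ne_of_lt (Fin.castSucc_lt_last i))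
            · exact absurd h (Fin.ne_of_lt (Fin.castSucc_lt_last j))
            · rwa [Fin.castSucc_injective n hi, Fin.castSucc_injective n hj]
          · intro h
            exact ⟨by simpa using h.ne, Or.inr (Or.inr ⟨i, j, rfl, rfl, h⟩)⟩
        rw [hc]; exact hH
      · refine connected_of_hub _ ⟨Fin.last n, by simp [Ne.symm hv]⟩ ?_
        rintro ⟨w, hw⟩ hne
        have hwv : w ≠ Fin.last n := by
          intro h; exact hne (Subtype.ext h)
        exact ⟨Ne.symm hwv, Or.inl rfl⟩
    · intro i
      exact ⟨(Fin.ne_of_lt (Fin.castSucc_lt_last i)).symm, Or.inl rfl⟩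
    · ext i j
      simp only [SimpleGraph.comap_adj, cone]
      constructor
      · rintro ⟨hne, h | h | ⟨i', j', hi, hj, hij⟩⟩
        · exact absurd h (Fin.ne_of_lt (Fin.castSucc_lt_last i))
        · exact absurd h (Fin.ne_of_lt (Fin.castSucc_lt_last j))
        · rwa [Fin.castSucc_injective n hi, Fin.castSucc_injective n hj]
      · intro h
        exact ⟨by simpa using h.ne, Or.inr (Or.inr ⟨i, j, rfl, rfl, h⟩)⟩
end

section
/- A graph G with at least k+1 vertices is k-connected if and only if every pair of distinct vertices of G is connected by k pairwise internally disjoint paths (Whitney/Menger). -/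
open scoped Classical

/-- A graph is `k`-connected if it has more than `k` vertices and remains
connected after the deletion of any set of fewer than `k` vertices. -/
def KConnected {V : Type*} [Fintype V] (k : ℕ) (G : SimpleGraph V) : Prop :=
  k < Fintype.card V ∧
    ∀ s : Finset V, s.card < k → (G.induce ((↑s : Set V)ᶜ)).Connected

namespace MengerAux

open SimpleGraph Walk

variable {V : Type*}

/-- Appending two paths that share only the junction vertex gives a path. -/
lemma isPath_append {G : SimpleGraph V} {a c b : V} {p : G.Walk a c} {q : G.Walk c b}
    (hp : p.IsPath) (hq : q.IsPath)
    (h : ∀ z, z ∈ p.support → z ∈ q.support → z = c) : (p.append q).IsPath := by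
  rw [Walk.isPath_def, Walk.support_append, List.nodup_append]
  refine ⟨hp.support_nodup, hq.support_nodup.sublist (List.tail_sublist _), ?_⟩
  intro z hz z' hz' hzz'
  subst hzz'
  have hzq : z ∈ q.support := List.mem_of_mem_tail hz'
  have := h z hz hzq
  subst this
  have := hq.support_nodup
  rw [q.support_eq_cons] at this
  exact (List.nodup_cons.mp this).1 hz'

/-- Prefix of a walk up to the first vertex in a set `S`. -/
lemma exists_prefix_first_hit {G : SimpleGraph V} (S : Set V) :
    ∀ {a b : V} (w : G.Walk a b), (∃ z ∈ w.support, z ∈ S) →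
      ∃ z, z ∈ S ∧ ∃ w' : G.Walk a z, w'.support ⊆ w.support ∧ w'.edges ⊆ w.edges ∧
        ∀ t ∈ w'.support, t ∈ S → t = z := by
  intro a b w
  induction w with
  | nil =>
    rintro ⟨z, hz, hzS⟩
    simp only [Walk.support_nil, List.mem_singleton] at hz
    subst hz
    exact ⟨z, hzS, Walk.nil, by simp, by simp, by simp⟩
  | @cons a c b h p ih =>
    intro hex
    by_cases haS : a ∈ S
    · exact ⟨a, haS, Walk.nil, by simp, by simp, by simp⟩
    · obtain ⟨z, hz, hzS⟩ := hex
      rw [Walk.support_cons, List.mem_cons] at hz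
      have hz' : z ∈ p.support := by
        rcases hz with rfl | hz
        · exact absurd hzS haS
        · exact hz
      obtain ⟨z', hz'S, w', hsup, hedg, hfirst⟩ := ih ⟨z, hz', hzS⟩
      refine ⟨z', hz'S, Walk.cons h w', ?_, ?_, ?_⟩
      · intro t ht
        rw [Walk.support_cons, List.mem_cons] at ht ⊢
        exact ht.imp id (fun h' => hsup h')
      · intro e he
        rw [Walk.edges_cons, List.mem_cons] at he ⊢
        exact he.imp id (fun h' => hedg h')
      · intro t ht htS
        rw [Walk.support_cons, List.mem_cons] at ht
        rcases ht with rfl | ht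
        · exact absurd htS haS
        · exact hfirst t ht htS

/-- Splitting a path at an edge it traverses. -/
lemma exists_split_at_edge {G : SimpleGraph V} {x y : V} :
    ∀ {a b : V} (w : G.Walk a b), w.IsPath → s(x, y) ∈ w.edges →
      ((∃ w₁ : G.Walk a x, w₁.support ⊆ w.support ∧ w₁.edges ⊆ w.edges ∧ s(x, y) ∉ w₁.edges) ∧
        (∃ w₂ : G.Walk y b, w₂.support ⊆ w.support ∧ w₂.edges ⊆ w.edges ∧ s(x, y) ∉ w₂.edges)) ∨
      ((∃ w₁ : G.Walk a y, w₁.support ⊆ w.support ∧ w₁.edges ⊆ w.edges ∧ s(x, y) ∉ w₁.edges) ∧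
        (∃ w₂ : G.Walk x b, w₂.support ⊆ w.support ∧ w₂.edges ⊆ w.edges ∧ s(x, y) ∉ w₂.edges)) := by
  intro a b w
  induction w with
  | nil => intro _ h; simp at h
  | @cons a c b h p ih =>
    intro hpath he
    have hppath : p.IsPath := hpath.of_cons
    have hnotp : s(a, c) ∉ p.edges := by
      have := hpath.edges_nodup
      rw [Walk.edges_cons, List.nodup_cons] at this
      exact this.1
    by_cases hec : s(x, y) = s(a, c)
    · rw [Sym2.eq_iff] at hec
      rcases hec with ⟨rfl, rfl⟩ | ⟨rfl, rfl⟩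
      · -- a = x, c = y
        left
        constructor
        · exact ⟨Walk.nil, by simp, by simp, by simp⟩
        · refine ⟨p, ?_, ?_, ?_⟩
          · intro t ht; rw [Walk.support_cons]; exact List.mem_cons_of_mem _ ht
          · intro e he'; rw [Walk.edges_cons]; exact List.mem_cons_of_mem _ he'
          · exact hnotp
      · -- a = y, c = x
        right
        constructor
        · exact ⟨Walk.nil, by simp, by simp, by simp⟩
        · refine ⟨p, ?_, ?_, ?_⟩
          · intro t ht; rw [Walk.support_cons]; exact List.mem_cons_of_mem _ ht
          · intro e he'; rw [Walk.edges_cons]; exact List.mem_cons_of_mem _ he'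
          · rw [Sym2.eq_swap]; exact hnotp
    · have hep : s(x, y) ∈ p.edges := by
        rw [Walk.edges_cons, List.mem_cons] at he
        exact he.resolve_left hec
      rcases ih hppath hep with ⟨⟨w₁, h1s, h1e, h1n⟩, hw2⟩ | ⟨⟨w₁, h1s, h1e, h1n⟩, hw2⟩
      · left
        refine ⟨⟨Walk.cons h w₁, ?_, ?_, ?_⟩, ?_⟩
        · intro t ht
          rw [Walk.support_cons, List.mem_cons] at ht ⊢
          exact ht.imp id (fun h' => h1s h')
        · intro e he'
          rw [Walk.edges_cons, List.mem_cons] at he' ⊢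
          exact he'.imp id (fun h' => h1e h')
        · rw [Walk.edges_cons, List.mem_cons]
          rintro (h' | h')
          · exact hec h'
          · exact h1n h'
        · obtain ⟨w₂, h2s, h2e, h2n⟩ := hw2
          refine ⟨w₂, ?_, ?_, h2n⟩
          · intro t ht; rw [Walk.support_cons]; exact List.mem_cons_of_mem _ (h2s ht)
          · intro e he'; rw [Walk.edges_cons]; exact List.mem_cons_of_mem _ (h2e he')
      · right
        refine ⟨⟨Walk.cons h w₁, ?_, ?_, ?_⟩, ?_⟩
        · intro t ht
          rw [Walk.support_cons, List.mem_cons] at ht ⊢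
          exact ht.imp id (fun h' => h1s h')
        · intro e he'
          rw [Walk.edges_cons, List.mem_cons] at he' ⊢
          exact he'.imp id (fun h' => h1e h')
        · rw [Walk.edges_cons, List.mem_cons]
          rintro (h' | h')
          · exact hec h'
          · exact h1n h'
        · obtain ⟨w₂, h2s, h2e, h2n⟩ := hw2
          refine ⟨w₂, ?_, ?_, h2n⟩
          · intro t ht; rw [Walk.support_cons]; exact List.mem_cons_of_mem _ (h2s ht)
          · intro e he'; rw [Walk.edges_cons]; exact List.mem_cons_of_mem _ (h2e he')

/-- On a path, `takeUntil` and `dropUntil` share only the split vertex. -/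
lemma eq_of_mem_takeUntil_mem_dropUntil {G : SimpleGraph V} {a b z : V} {p : G.Walk a b}
    (hp : p.IsPath) (hz : z ∈ p.support) {t : V}
    (h1 : t ∈ (p.takeUntil z hz).support) (h2 : t ∈ (p.dropUntil z hz).support) : t = z := by
  by_contra hne
  have hspec := p.take_spec hz
  have hnd : p.support.Nodup := hp.support_nodup
  rw [← hspec, Walk.support_append, List.nodup_append] at hnd
  have h2' : t ∈ (p.dropUntil z hz).support.tail := by
    rw [(p.dropUntil z hz).support_eq_cons] at h2
    rcases List.mem_cons.mp h2 with rfl | h2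
    · exact absurd rfl hne
    · exact h2
  exact hnd.2.2 t h1 t h2' rfl

/-- Lift a walk whose support lies in `t` to the induced subgraph. -/
lemma exists_lift_induce {G : SimpleGraph V} {t : Set V} :
    ∀ {a b : V} (w : G.Walk a b) (ha : a ∈ t) (hb : b ∈ t)
      (h : ∀ x ∈ w.support, x ∈ t),
      ∃ w' : (G.induce t).Walk ⟨a, ha⟩ ⟨b, hb⟩, ∀ z ∈ w'.support, (z : V) ∈ w.support := by
  intro a b w
  induction w with
  | nil =>
    intro ha hb _
    exact ⟨Walk.nil, by simp⟩
  | @cons a c b hadj p ih =>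
    intro ha hb h
    have hc : c ∈ t := h c (by simp)
    obtain ⟨w', hw'⟩ := ih hc hb (fun x hx => h x (by rw [Walk.support_cons]; exact List.mem_cons_of_mem _ hx))
    refine ⟨Walk.cons (by simpa using hadj) w', ?_⟩
    intro z hz
    rw [Walk.support_cons, List.mem_cons] at hz
    rcases hz with rfl | hz
    · simp
    · rw [Walk.support_cons]; exact List.mem_cons_of_mem _ (hw' z hz)

/-- `S` separates `A` from `B` in `G`: every `A`–`B` walk meets `S`. -/
def Sep (G : SimpleGraph V) (A B S : Finset V) : Prop :=
  ∀ ⦃a⦄, a ∈ A → ∀ ⦃b⦄, b ∈ B → ∀ w : G.Walk a b, ∃ z ∈ S, z ∈ w.support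

/-- There exist `k` pairwise (fully) disjoint `A`–`B` paths in `G`. -/
def DisjPaths (G : SimpleGraph V) (A B : Finset V) (k : ℕ) : Prop :=
  ∃ (a b : Fin k → V) (p : ∀ i, G.Walk (a i) (b i)),
    (∀ i, a i ∈ A) ∧ (∀ i, b i ∈ B) ∧ (∀ i, (p i).IsPath) ∧
      ∀ i j, i ≠ j → ∀ z, z ∈ (p i).support → z ∉ (p j).support

lemma sep_comm {G : SimpleGraph V} {A B S : Finset V} (h : Sep G A B S) : Sep G B A S := by
  intro b hb a ha w
  obtain ⟨z, hzS, hz⟩ := h ha hb w.reverse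
  exact ⟨z, hzS, by simpa [Walk.support_reverse] using hz⟩

section Fin

variable [Fintype V]

/-- Base case: the edgeless graph. -/
lemma setMenger_base {G : SimpleGraph V} (hE : G.edgeFinset = ∅) (A B : Finset V) (k : ℕ)
    (h : ∀ S : Finset V, Sep G A B S → k ≤ S.card) : DisjPaths G A B k := by
  have hsep : Sep G A B (A ∩ B) := by
    intro a ha b hb w
    cases w with
    | nil => exact ⟨a, Finset.mem_inter.mpr ⟨ha, hb⟩, by simp⟩
    | @cons _ c _ hadj p =>
      exfalso
      have : s(a, c) ∈ G.edgeFinset := by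
        rw [SimpleGraph.mem_edgeFinset]
        exact hadj
      rw [hE] at this
      simp at this
  have hk : k ≤ (A ∩ B).card := h _ hsep
  obtain ⟨t, hts, htc⟩ := Finset.exists_subset_card_eq hk
  let e : Fin k → t := fun i => t.equivFin.symm (Fin.cast htc.symm i)
  have he : Function.Injective e := fun i j hij => by
    have := t.equivFin.symm.injective hij
    simpa [Fin.ext_iff] using this
  refine ⟨fun i => ↑(e i), fun i => ↑(e i), fun i => Walk.nil, ?_, ?_, ?_, ?_⟩
  · intro i; exact (Finset.mem_inter.mp (hts (e i).2)).1
  · intro i; exact (Finset.mem_inter.mp (hts (e i).2)).2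
  · intro i; simp
  · intro i j hij z hz hz'
    have h1 : z = ↑(e i) := by simpa using hz
    have h2 : z = ↑(e j) := by simpa using hz'
    exact hij (he (Subtype.ext (h1 ▸ h2)))

/-- Key one-sided separator bound for the Göring argument. -/
lemma aside_bound {G : SimpleGraph V} {x y : V} {A B S : Finset V} {k : ℕ} (hxy : x ≠ y)
    (hk : ∀ T : Finset V, Sep G A B T → k ≤ T.card)
    (hS : Sep (G.deleteEdges {s(x, y)}) A B S) (hyS : y ∉ S)
    (hyB : ∃ b ∈ B, ∃ w : (G.deleteEdges {s(x, y)}).Walk y b, ∀ z ∈ w.support, z ∉ S) :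
    ∀ T : Finset V, Sep (G.deleteEdges {s(x, y)}) A (insert x S) T → k ≤ T.card := by
  intro T hT
  set G' := G.deleteEdges {s(x, y)} with hG'
  apply hk
  intro a ha b hb w
  have hbp : w.bypass.IsPath := w.bypass_isPath
  suffices h : ∃ z ∈ T, z ∈ w.bypass.support by
    obtain ⟨z, hzT, hz⟩ := h
    exact ⟨z, hzT, w.support_bypass_subset hz⟩
  set P := w.bypass with hP
  have hhit : ∃ z ∈ P.support, z ∈ ((insert x (insert y S) : Finset V) : Set V) := by
    by_cases he : s(x, y) ∈ P.edges
    · exact ⟨x, P.fst_mem_support_of_mem_edges he, by simp⟩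
    · have hPe : ∀ e ∈ P.edges, e ∈ G'.edgeSet := by
        intro e heP
        rw [hG', SimpleGraph.edgeSet_deleteEdges]
        exact ⟨P.edges_subset_edgeSet heP, by rintro rfl; exact he heP⟩
      obtain ⟨z, hzS, hz⟩ := hS ha hb (P.transfer G' hPe)
      rw [Walk.support_transfer] at hz
      exact ⟨z, hz, by simp [hzS]⟩
  obtain ⟨z, hzS'', w₁, hsup, hedg, hfirst⟩ := exists_prefix_first_hit _ P hhit
  simp only [Finset.coe_insert, Set.mem_insert_iff, Finset.mem_coe] at hzS''
  have hw₁e : s(x, y) ∉ w₁.edges := by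
    intro hmem
    have hx1 : x ∈ w₁.support := w₁.fst_mem_support_of_mem_edges hmem
    have hy1 : y ∈ w₁.support := w₁.snd_mem_support_of_mem_edges hmem
    have hx2 := hfirst x hx1 (by simp)
    have hy2 := hfirst y hy1 (by simp)
    exact hxy (hx2.trans hy2.symm)
  have hw₁G' : ∀ e ∈ w₁.edges, e ∈ G'.edgeSet := by
    intro e he
    rw [hG', SimpleGraph.edgeSet_deleteEdges]
    exact ⟨P.edges_subset_edgeSet (hedg he), by rintro rfl; exact hw₁e he⟩
  rcases hzS'' with rfl | rfl | hzS
  · obtain ⟨t, htT, ht⟩ := hT ha (Finset.mem_insert_self _ _) (w₁.transfer G' hw₁G')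
    rw [Walk.support_transfer] at ht
    exact ⟨t, htT, hsup ht⟩
  · exfalso
    obtain ⟨b', hb', wb, hwb⟩ := hyB
    obtain ⟨s, hsS, hs⟩ := hS ha hb' ((w₁.transfer G' hw₁G').append wb)
    rw [Walk.mem_support_append_iff, Walk.support_transfer] at hs
    rcases hs with hs | hs
    · have := hfirst s hs (by simp [hsS])
      subst this
      exact hyS hsS
    · exact hwb s hs hsS
  · obtain ⟨t, htT, ht⟩ := hT ha (Finset.mem_insert_of_mem hzS) (w₁.transfer G' hw₁G')
    rw [Walk.support_transfer] at ht
    exact ⟨t, htT, hsup ht⟩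

/-- Symmetric version of `aside_bound`, for the `B` side. -/
lemma bside_bound {G : SimpleGraph V} {x y : V} {A B S : Finset V} {k : ℕ} (hxy : x ≠ y)
    (hk : ∀ T : Finset V, Sep G A B T → k ≤ T.card)
    (hS : Sep (G.deleteEdges {s(x, y)}) A B S) (hxS : x ∉ S)
    (hxA : ∃ a ∈ A, ∃ w : (G.deleteEdges {s(x, y)}).Walk a x, ∀ z ∈ w.support, z ∉ S) :
    ∀ T : Finset V, Sep (G.deleteEdges {s(x, y)}) (insert y S) B T → k ≤ T.card := by
  have hswap : G.deleteEdges {s(y, x)} = G.deleteEdges {s(x, y)} := by rw [Sym2.eq_swap]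
  intro T hT
  refine aside_bound (G := G) (x := y) (y := x) (A := B) (B := A) (S := S) hxy.symm
    (fun T' h => hk T' (sep_comm h)) ?_ hxS ?_ T ?_
  · rw [hswap]; exact sep_comm hS
  · obtain ⟨a, ha, w, hw⟩ := hxA
    refine ⟨a, ha, ?_⟩
    rw [hswap]
    exact ⟨w.reverse, fun z hz => hw z (by simpa [Walk.support_reverse] using hz)⟩
  · rw [hswap]; exact sep_comm hT

/-- The main gluing step (case 2 of the Göring induction). -/
lemma case2core {G : SimpleGraph V} {x y : V} {A B S : Finset V} {k : ℕ}
    (hadj : G.Adj x y)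
    (hk : ∀ T : Finset V, Sep G A B T → k ≤ T.card)
    (hS : Sep (G.deleteEdges {s(x, y)}) A B S)
    (hcard : S.card + 1 = k) (hxS : x ∉ S) (hyS : y ∉ S)
    (hxA : ∃ a ∈ A, ∃ w : (G.deleteEdges {s(x, y)}).Walk a x, ∀ z ∈ w.support, z ∉ S)
    (hyB : ∃ b ∈ B, ∃ w : (G.deleteEdges {s(x, y)}).Walk y b, ∀ z ∈ w.support, z ∉ S)
    (ih : ∀ A₂ B₂ : Finset V,
      (∀ T : Finset V, Sep (G.deleteEdges {s(x, y)}) A₂ B₂ T → k ≤ T.card) →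
        DisjPaths (G.deleteEdges {s(x, y)}) A₂ B₂ k) :
    DisjPaths G A B k := by
  set G' := G.deleteEdges {s(x, y)} with hG'
  have hxy : x ≠ y := hadj.ne
  obtain ⟨aA, zA0, pA0, haA, hzA0, hpA0, hdisjA0⟩ :=
    ih A (insert x S) (aside_bound hxy hk hS hyS hyB)
  obtain ⟨zB0, bB, qB0, hzB0, hbB, hqB0, hdisjB0⟩ :=
    ih (insert y S) B (bside_bound hxy hk hS hxS hxA)
  -- trim the A-side family
  have htrimA : ∀ i, ∃ z, z ∈ ((insert x S : Finset V) : Set V) ∧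
      ∃ w' : G'.Walk (aA i) z, w'.support ⊆ (pA0 i).support ∧ w'.edges ⊆ (pA0 i).edges ∧
        ∀ t ∈ w'.support, t ∈ ((insert x S : Finset V) : Set V) → t = z :=
    fun i => exists_prefix_first_hit _ (pA0 i)
      ⟨zA0 i, (pA0 i).end_mem_support, Finset.mem_coe.mpr (hzA0 i)⟩
  choose zA hzA wA hsupA _hedgA hfirstA using htrimA
  set pA : ∀ i, G'.Walk (aA i) (zA i) := fun i => (wA i).bypass with hpAdef
  have hpA : ∀ i, (pA i).IsPath := fun i => (wA i).bypass_isPath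
  have hsupA' : ∀ i, (pA i).support ⊆ (pA0 i).support :=
    fun i => fun t ht => hsupA i ((wA i).support_bypass_subset ht)
  have hfirstA' : ∀ i, ∀ t ∈ (pA i).support, t ∈ insert x S → t = zA i :=
    fun i t ht hts => hfirstA i t ((wA i).support_bypass_subset ht) (Finset.mem_coe.mpr hts)
  have hdisjA : ∀ i j, i ≠ j → ∀ z, z ∈ (pA i).support → z ∉ (pA j).support :=
    fun i j hij z hz hz' => hdisjA0 i j hij z (hsupA' i hz) (hsupA' j hz')
  have hzAmem : ∀ i, zA i ∈ insert x S := fun i => Finset.mem_coe.mp (hzA i)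
  have hinjA : Function.Injective zA := by
    intro i j hij
    by_contra hne
    exact hdisjA i j hne (zA i) (pA i).end_mem_support
      (by rw [hij]; exact (pA j).end_mem_support)
  have hcardx : (insert x S).card = k := by rw [Finset.card_insert_of_notMem hxS, hcard]
  have himageA : ∀ c ∈ insert x S, ∃ i, zA i = c := by
    intro c hc
    have hsub : Finset.univ.image zA ⊆ insert x S := by
      intro c' hc'
      obtain ⟨i, _, rfl⟩ := Finset.mem_image.mp hc'
      exact hzAmem i
    have hcard2 : (Finset.univ.image zA).card = k := by
      rw [Finset.card_image_of_injective _ hinjA, Finset.card_univ, Fintype.card_fin]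
    have := Finset.eq_of_subset_of_card_le hsub (by rw [hcard2, hcardx])
    rw [← this] at hc
    obtain ⟨i, _, hi⟩ := Finset.mem_image.mp hc
    exact ⟨i, hi⟩
  -- trim the B-side family
  have htrimB : ∀ j, ∃ z, z ∈ ((insert y S : Finset V) : Set V) ∧
      ∃ w' : G'.Walk (bB j) z, w'.support ⊆ (qB0 j).reverse.support ∧
        w'.edges ⊆ (qB0 j).reverse.edges ∧
        ∀ t ∈ w'.support, t ∈ ((insert y S : Finset V) : Set V) → t = z :=
    fun j => exists_prefix_first_hit _ (qB0 j).reverse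
      ⟨zB0 j, by rw [Walk.support_reverse]; exact List.mem_reverse.mpr (qB0 j).start_mem_support,
        Finset.mem_coe.mpr (hzB0 j)⟩
  choose zB hzB wB _hsupB0 _hedgB hfirstB0 using htrimB
  set qB : ∀ j, G'.Walk (zB j) (bB j) := fun j => (wB j).reverse.bypass with hqBdef
  have hqB : ∀ j, (qB j).IsPath := fun j => (wB j).reverse.bypass_isPath
  have hsupB1 : ∀ j, (qB j).support ⊆ (wB j).support := by
    intro j t ht
    have := (wB j).reverse.support_bypass_subset ht
    rwa [Walk.support_reverse, List.mem_reverse] at this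
  have hsupB' : ∀ j, (qB j).support ⊆ (qB0 j).support := by
    intro j t ht
    have := _hsupB0 j (hsupB1 j ht)
    rwa [Walk.support_reverse, List.mem_reverse] at this
  have hfirstB' : ∀ j, ∀ t ∈ (qB j).support, t ∈ insert y S → t = zB j :=
    fun j t ht hts => hfirstB0 j t (hsupB1 j ht) (Finset.mem_coe.mpr hts)
  have hdisjB : ∀ i j, i ≠ j → ∀ z, z ∈ (qB i).support → z ∉ (qB j).support :=
    fun i j hij z hz hz' => hdisjB0 i j hij z (hsupB' i hz) (hsupB' j hz')
  have hzBmem : ∀ j, zB j ∈ insert y S := fun j => Finset.mem_coe.mp (hzB j)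
  have hinjB : Function.Injective zB := by
    intro i j hij
    by_contra hne
    exact hdisjB i j hne (zB i) (qB i).start_mem_support
      (by rw [hij]; exact (qB j).start_mem_support)
  have hcardy : (insert y S).card = k := by rw [Finset.card_insert_of_notMem hyS, hcard]
  have himageB : ∀ c ∈ insert y S, ∃ j, zB j = c := by
    intro c hc
    have hsub : Finset.univ.image zB ⊆ insert y S := by
      intro c' hc'
      obtain ⟨i, _, rfl⟩ := Finset.mem_image.mp hc'
      exact hzBmem i
    have hcard2 : (Finset.univ.image zB).card = k := by
      rw [Finset.card_image_of_injective _ hinjB, Finset.card_univ, Fintype.card_fin]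
    have := Finset.eq_of_subset_of_card_le hsub (by rw [hcard2, hcardy])
    rw [← this] at hc
    obtain ⟨i, _, hi⟩ := Finset.mem_image.mp hc
    exact ⟨i, hi⟩
  -- the key intersection claim
  have claimB : ∀ i j z, z ∈ (pA i).support → z ∈ (qB j).support →
      z = zA i ∧ z = zB j ∧ z ∈ S := by
    intro i j z h1 h2
    obtain ⟨s, hsS, hs⟩ := hS (haA i) (hbB j)
      (((pA i).takeUntil z h1).append ((qB j).dropUntil z h2))
    rw [Walk.mem_support_append_iff] at hs
    have keyA : z = zA i → z ∈ S → z = zA i ∧ z = zB j ∧ z ∈ S := by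
      intro hz hzs
      refine ⟨hz, ?_, hzs⟩
      exact hfirstB' j z h2 (Finset.mem_insert_of_mem hzs)
    have keyB : z = zB j → z ∈ S → z = zA i ∧ z = zB j ∧ z ∈ S := by
      intro hz hzs
      exact ⟨hfirstA' i z h1 (Finset.mem_insert_of_mem hzs), hz, hzs⟩
    rcases hs with hs | hs
    · have hsp : s ∈ (pA i).support := (pA i).support_takeUntil_subset h1 hs
      have hsz : s = zA i := hfirstA' i s hsp (Finset.mem_insert_of_mem hsS)
      have hs2 : zA i ∈ ((pA i).takeUntil z h1).support := hsz ▸ hs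
      have hzeq : zA i = z :=
        eq_of_mem_takeUntil_mem_dropUntil (hpA i) h1 hs2 (Walk.end_mem_support _)
      exact keyA hzeq.symm (by rw [← hzeq, ← hsz]; exact hsS)
    · have hsq : s ∈ (qB j).support := (qB j).support_dropUntil_subset h2 hs
      have hsz : s = zB j := hfirstB' j s hsq (Finset.mem_insert_of_mem hsS)
      have hs2 : zB j ∈ ((qB j).dropUntil z h2).support := hsz ▸ hs
      have hzeq : zB j = z :=
        eq_of_mem_takeUntil_mem_dropUntil (hqB j) h2 (Walk.start_mem_support _) hs2
      exact keyB hzeq.symm (by rw [← hzeq, ← hsz]; exact hsS)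
  -- partner map
  set v : Fin k → V := fun i => if zA i = x then y else zA i with hvdef
  have hv : ∀ i, v i ∈ insert y S := by
    intro i
    by_cases hix : zA i = x
    · simp [hvdef, hix]
    · have := (Finset.mem_insert.mp (hzAmem i)).resolve_left hix
      simp [hvdef, hix, Finset.mem_insert_of_mem this]
  have hπex : ∀ i, ∃ j, zB j = v i := fun i => himageB (v i) (hv i)
  choose π hπ using hπex
  have hvinj : Function.Injective v := by
    intro i i' hii
    have hii' : (if zA i = x then y else zA i) = (if zA i' = x then y else zA i') := hii
    by_cases h1 : zA i = x <;> by_cases h2 : zA i' = x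
    · exact hinjA (h1.trans h2.symm)
    · exfalso
      rw [if_pos h1, if_neg h2] at hii'
      have := (Finset.mem_insert.mp (hzAmem i')).resolve_left h2
      rw [← hii'] at this
      exact hyS this
    · exfalso
      rw [if_neg h1, if_pos h2] at hii'
      have := (Finset.mem_insert.mp (hzAmem i)).resolve_left h1
      rw [hii'] at this
      exact hyS this
    · rw [if_neg h1, if_neg h2] at hii'
      exact hinjA hii'
  have hπinj : Function.Injective π := by
    intro i i' hii
    apply hvinj
    rw [← hπ i, ← hπ i', hii]
  -- transfer to G
  have hG'sub : G'.edgeSet ⊆ G.edgeSet := by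
    rw [hG', SimpleGraph.edgeSet_deleteEdges]; exact Set.diff_subset
  have htransA : ∀ i, ∀ e ∈ (pA i).edges, e ∈ G.edgeSet :=
    fun i e he => hG'sub ((pA i).edges_subset_edgeSet he)
  have htransB : ∀ j, ∀ e ∈ (qB j).edges, e ∈ G.edgeSet :=
    fun j e he => hG'sub ((qB j).edges_subset_edgeSet he)
  -- construct the glued paths
  have hR : ∀ i, ∃ R : G.Walk (aA i) (bB (π i)), R.IsPath ∧
      ∀ z, z ∈ R.support ↔ (z ∈ (pA i).support ∨ z ∈ (qB (π i)).support) := by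
    intro i
    by_cases hix : zA i = x
    · have hzBy : zB (π i) = y := by rw [hπ i, hvdef]; simp [hix]
      let P : G.Walk (aA i) x := ((pA i).transfer G (htransA i)).copy rfl hix
      let Q : G.Walk y (bB (π i)) := ((qB (π i)).transfer G (htransB (π i))).copy hzBy rfl
      have hPsup : P.support = (pA i).support := by
        rw [Walk.support_copy, Walk.support_transfer]
      have hQsup : Q.support = (qB (π i)).support := by
        rw [Walk.support_copy, Walk.support_transfer]
      have hPpath : P.IsPath := by
        rw [Walk.isPath_copy]; exact (hpA i).transfer _
      have hQpath : Q.IsPath := by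
        rw [Walk.isPath_copy]; exact (hqB (π i)).transfer _
      have hxq : x ∉ (qB (π i)).support := by
        intro hxq
        have hxp : x ∈ (pA i).support := by rw [← hix]; exact (pA i).end_mem_support
        exact hxS (claimB i (π i) x hxp hxq).2.2
      refine ⟨P.append (Walk.cons hadj Q), ?_, ?_⟩
      · apply isPath_append hPpath
        · rw [Walk.cons_isPath_iff]
          exact ⟨hQpath, by rw [hQsup]; exact hxq⟩
        · intro z hz hz'
          rw [Walk.support_cons, List.mem_cons] at hz'
          rcases hz' with rfl | hz'
          · rfl
          · rw [hQsup] at hz'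
            rw [hPsup] at hz
            rw [← hix]
            exact (claimB i (π i) z hz hz').1
      · intro z
        rw [Walk.mem_support_append_iff, Walk.support_cons, List.mem_cons, hPsup, hQsup]
        constructor
        · rintro (h | rfl | h)
          · exact Or.inl h
          · exact Or.inl (by rw [← hix]; exact (pA i).end_mem_support)
          · exact Or.inr h
        · rintro (h | h)
          · exact Or.inl h
          · exact Or.inr (Or.inr h)
    · have hzAS : zA i ∈ S := (Finset.mem_insert.mp (hzAmem i)).resolve_left hix
      have hzBz : zB (π i) = zA i := by rw [hπ i, hvdef]; simp [hix]
      let Q : G.Walk (zA i) (bB (π i)) := ((qB (π i)).transfer G (htransB (π i))).copy hzBz rfl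
      have hQsup : Q.support = (qB (π i)).support := by
        rw [Walk.support_copy, Walk.support_transfer]
      have hQpath : Q.IsPath := by
        rw [Walk.isPath_copy]; exact (hqB (π i)).transfer _
      refine ⟨((pA i).transfer G (htransA i)).append Q, ?_, ?_⟩
      · apply isPath_append ((hpA i).transfer _) hQpath
        intro z hz hz'
        rw [Walk.support_transfer] at hz
        rw [hQsup] at hz'
        exact (claimB i (π i) z hz hz').1
      · intro z
        rw [Walk.mem_support_append_iff, Walk.support_transfer, hQsup]
  choose R hRpath hRsupp using hR
  refine ⟨aA, fun i => bB (π i), R, haA, fun i => hbB (π i), hRpath, ?_⟩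
  intro i j hij z hz hz'
  rw [hRsupp i z] at hz
  rw [hRsupp j z] at hz'
  have crossCase : ∀ i' j', i' ≠ j' → z ∈ (pA i').support → z ∈ (qB (π j')).support → False := by
    intro i' j' hne h1 h2
    obtain ⟨hz1, hz2, hzS⟩ := claimB i' (π j') z h1 h2
    rw [hπ j'] at hz2
    have hz2' : z = (if zA j' = x then y else zA j') := hz2
    by_cases hjx : zA j' = x
    · rw [if_pos hjx] at hz2'
      exact hyS (hz2' ▸ hzS)
    · rw [if_neg hjx] at hz2'
      exact hne (hinjA (hz1.symm.trans hz2'))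
  rcases hz with hz | hz
  · rcases hz' with hz' | hz'
    · exact hdisjA i j hij z hz hz'
    · exact crossCase i j hij hz hz'
  · rcases hz' with hz' | hz'
    · exact crossCase j i (Ne.symm hij) hz' hz
    · exact hdisjB (π i) (π j) (fun h => hij (hπinj h)) z hz hz'

/-- Menger's theorem, set version: if every `A`–`B` separator has at least `k`
vertices, then there are `k` pairwise disjoint `A`–`B` paths. -/
theorem setMenger (G : SimpleGraph V) (A B : Finset V) (k : ℕ)
    (h : ∀ S : Finset V, Sep G A B S → k ≤ S.card) : DisjPaths G A B k := by
  suffices H : ∀ (n : ℕ) (G : SimpleGraph V), G.edgeFinset.card ≤ n →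
      ∀ A B : Finset V, ∀ k : ℕ,
      (∀ S : Finset V, Sep G A B S → k ≤ S.card) → DisjPaths G A B k from
    H G.edgeFinset.card G le_rfl A B k h
  intro n
  induction n with
  | zero =>
    intro G hG A B k h
    exact setMenger_base (Finset.card_eq_zero.mp (Nat.le_zero.mp hG)) A B k h
  | succ n ihn =>
    intro G hG A B k hsep
    by_cases hE : G.edgeFinset = ∅
    · exact setMenger_base hE A B k hsep
    · obtain ⟨e, he⟩ := Finset.nonempty_iff_ne_empty.mpr hE
      revert he
      refine Sym2.ind (fun x y => ?_) e
      intro he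
      have hadj : G.Adj x y := SimpleGraph.mem_edgeFinset.mp he
      set G' := G.deleteEdges {s(x, y)} with hG'def
      have hEfin : G'.edgeFinset = G.edgeFinset.erase s(x, y) := by
        ext f
        rw [SimpleGraph.mem_edgeFinset, Finset.mem_erase, SimpleGraph.mem_edgeFinset, hG'def,
          SimpleGraph.edgeSet_deleteEdges]
        constructor
        · rintro ⟨h1, h2⟩; exact ⟨by simpa using h2, h1⟩
        · rintro ⟨h1, h2⟩; exact ⟨h2, by simpa using h1⟩
      have hG'card : G'.edgeFinset.card ≤ n := by
        rw [hEfin, Finset.card_erase_of_mem he]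
        omega
      have ih' : ∀ A₂ B₂ : Finset V,
          (∀ T : Finset V, Sep G' A₂ B₂ T → k ≤ T.card) → DisjPaths G' A₂ B₂ k :=
        fun A₂ B₂ h₂ => ihn G' (by convert hG'card) A₂ B₂ k h₂
      by_cases hsmall : ∃ S : Finset V, Sep G' A B S ∧ S.card < k
      · obtain ⟨S, hS, hSc⟩ := hsmall
        -- `insert x S` and `insert y S` separate `A` and `B` in `G`
        have hins : ∀ c : V, (∀ {p q : V} (w : G.Walk p q), s(x, y) ∈ w.edges → c ∈ w.support) →
            Sep G A B (insert c S) := by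
          intro c hc a ha b hb w
          by_cases hew : s(x, y) ∈ w.bypass.edges
          · exact ⟨c, Finset.mem_insert_self _ _, w.support_bypass_subset (hc _ hew)⟩
          · have hwe : ∀ f ∈ w.bypass.edges, f ∈ G'.edgeSet := by
              intro f hf
              rw [hG'def, SimpleGraph.edgeSet_deleteEdges]
              exact ⟨w.bypass.edges_subset_edgeSet hf, by rintro rfl; exact hew hf⟩
            obtain ⟨z, hzS, hz⟩ := hS ha hb (w.bypass.transfer G' hwe)
            rw [Walk.support_transfer] at hz
            exact ⟨z, Finset.mem_insert_of_mem hzS, w.support_bypass_subset hz⟩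
        have hSx : Sep G A B (insert x S) :=
          hins x (fun w hw => w.fst_mem_support_of_mem_edges hw)
        have hSy : Sep G A B (insert y S) :=
          hins y (fun w hw => w.snd_mem_support_of_mem_edges hw)
        have hxS : x ∉ S := by
          intro hmem
          have heq : insert x S = S := Finset.insert_eq_self.mpr hmem
          have := hsep (insert x S) hSx
          rw [heq] at this
          omega
        have hyS : y ∉ S := by
          intro hmem
          have heq : insert y S = S := Finset.insert_eq_self.mpr hmem
          have := hsep (insert y S) hSy
          rw [heq] at this
          omega
        have hcards : S.card + 1 = k := by
          have h1 := hsep _ hSx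
          rw [Finset.card_insert_of_notMem hxS] at h1
          omega
        -- `S` is not a separator in `G`: find a path avoiding `S`, which must use `xy`
        have hnot : ¬ Sep G A B S := fun h' => by have := hsep S h'; omega
        have hex : ∃ a, a ∈ A ∧ ∃ b, b ∈ B ∧ ∃ w : G.Walk a b, ∀ z ∈ S, z ∉ w.support := by
          by_contra hcon
          apply hnot
          intro a ha b hb w
          by_contra hww
          push_neg at hww
          exact hcon ⟨a, ha, b, hb, w, hww⟩
        obtain ⟨a, ha, b, hb, w0, hw0⟩ := hex
        set P := w0.bypass with hPdef
        have hPpath : P.IsPath := w0.bypass_isPath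
        have hPavoid : ∀ z ∈ P.support, z ∉ S :=
          fun z hz hzS => hw0 z hzS (w0.support_bypass_subset hz)
        have hPe : s(x, y) ∈ P.edges := by
          by_contra hew
          have hwe : ∀ f ∈ P.edges, f ∈ G'.edgeSet := by
            intro f hf
            rw [hG'def, SimpleGraph.edgeSet_deleteEdges]
            exact ⟨P.edges_subset_edgeSet hf, by rintro rfl; exact hew hf⟩
          obtain ⟨z, hzS, hz⟩ := hS ha hb (P.transfer G' hwe)
          rw [Walk.support_transfer] at hz
          exact hPavoid z hz hzS
        have htransfer : ∀ {p q : V} (w' : G.Walk p q), w'.edges ⊆ P.edges →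
            s(x, y) ∉ w'.edges → ∀ f ∈ w'.edges, f ∈ G'.edgeSet := by
          intro p q w' hsub hnm f hf
          rw [hG'def, SimpleGraph.edgeSet_deleteEdges]
          exact ⟨P.edges_subset_edgeSet (hsub hf), by rintro rfl; exact hnm hf⟩
        rcases exists_split_at_edge P hPpath hPe with
          ⟨⟨w1, h1s, h1e, h1n⟩, ⟨w2, h2s, h2e, h2n⟩⟩ |
          ⟨⟨w1, h1s, h1e, h1n⟩, ⟨w2, h2s, h2e, h2n⟩⟩
        · -- orientation a → x, y → b
          refine case2core hadj hsep hS hcards hxS hyS ?_ ?_ ih'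
          · exact ⟨a, ha, w1.transfer G' (htransfer w1 h1e h1n),
              fun z hz => hPavoid z (h1s (by rwa [Walk.support_transfer] at hz))⟩
          · exact ⟨b, hb, w2.transfer G' (htransfer w2 h2e h2n),
              fun z hz => hPavoid z (h2s (by rwa [Walk.support_transfer] at hz))⟩
        · -- orientation a → y, x → b : apply with roles of x and y swapped
          have hsw : G.deleteEdges {s(y, x)} = G' := by rw [hG'def, Sym2.eq_swap]
          have h1n' : s(y, x) ∉ w1.edges := by rwa [Sym2.eq_swap]
          have h2n' : s(y, x) ∉ w2.edges := by rwa [Sym2.eq_swap]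
          refine case2core (x := y) (y := x) hadj.symm hsep ?_ hcards hyS hxS ?_ ?_ ?_
          · rw [hsw]; exact hS
          · refine ⟨a, ha, ?_⟩
            rw [hsw]
            exact ⟨w1.transfer G' (htransfer w1 h1e h1n),
              fun z hz => hPavoid z (h1s (by rwa [Walk.support_transfer] at hz))⟩
          · refine ⟨b, hb, ?_⟩
            rw [hsw]
            exact ⟨w2.transfer G' (htransfer w2 h2e h2n),
              fun z hz => hPavoid z (h2s (by rwa [Walk.support_transfer] at hz))⟩
          · rw [hsw]; exact ih'
      · push_neg at hsmall
        obtain ⟨a, b, p, ha, hb, hp, hdisj⟩ := ih' A B hsmall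
        have hle : ∀ i, ∀ f ∈ (p i).edges, f ∈ G.edgeSet := by
          intro i f hf
          have := (p i).edges_subset_edgeSet hf
          rw [hG'def, SimpleGraph.edgeSet_deleteEdges] at this
          exact this.1
        refine ⟨a, b, fun i => (p i).transfer G (hle i), ha, hb,
          fun i => (hp i).transfer _, ?_⟩
        intro i j hij z hz hz'
        rw [Walk.support_transfer] at hz hz'
        exact hdisj i j hij z hz hz'

/-- Local Menger: `k` internally disjoint paths between non-adjacent vertices. -/
theorem local_menger {G : SimpleGraph V} {u v : V} (huv : u ≠ v) (hadj : ¬ G.Adj u v) (k : ℕ)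
    (hsep : ∀ S : Finset V, u ∉ S → v ∉ S →
      (∀ w : G.Walk u v, ∃ z ∈ S, z ∈ w.support) → k ≤ S.card) :
    ∃ P : Fin k → G.Walk u v, (∀ i, (P i).IsPath) ∧
      ∀ i j, i ≠ j → ∀ x, x ∈ (P i).support → x ∈ (P j).support → x = u ∨ x = v := by
  classical
  set V' : Set V := {w | w ≠ u ∧ w ≠ v} with hV'
  haveI : Fintype ↥V' := Fintype.ofFinite _
  set G₂ := G.induce V' with hG₂
  set A : Finset ↥V' := Finset.univ.filter (fun a => G.Adj u ↑a) with hA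
  set B : Finset ↥V' := Finset.univ.filter (fun a => G.Adj v ↑a) with hB
  have hsep' : ∀ S' : Finset ↥V', Sep G₂ A B S' → k ≤ S'.card := by
    intro S' hS'
    set S : Finset V := S'.image Subtype.val with hSdef
    have hcardeq : S.card = S'.card := Finset.card_image_of_injective _ Subtype.val_injective
    have hmemS : ∀ z ∈ S, z ≠ u ∧ z ≠ v := by
      intro z hz
      obtain ⟨z', _, rfl⟩ := Finset.mem_image.mp hz
      exact z'.prop
    rw [← hcardeq]
    apply hsep S (fun h => (hmemS u h).1 rfl) (fun h => (hmemS v h).2 rfl)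
    intro w
    by_contra hcon
    push_neg at hcon
    have key : ∀ (P : G.Walk u v), P.IsPath → (∀ z ∈ P.support, z ∉ S) → False := by
      intro P hPp hPa
      cases P with
      | nil => exact huv rfl
      | @cons _ c _ h1 P1 =>
        have hcv : c ≠ v := fun h => hadj (h ▸ h1)
        rw [Walk.cons_isPath_iff] at hPp
        obtain ⟨hP1p, huP1⟩ := hPp
        have hcu : c ≠ u := fun h => huP1 (h ▸ P1.start_mem_support)
        obtain ⟨d, h2, P2, hrev⟩ : ∃ d, ∃ h2 : G.Adj v d, ∃ P2 : G.Walk d c,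
            P1.reverse = Walk.cons h2 P2 :=
          Walk.exists_eq_cons_of_ne (fun h => hcv h.symm) P1.reverse
        have hrevpath : P1.reverse.IsPath := hP1p.reverse
        rw [hrev, Walk.cons_isPath_iff] at hrevpath
        obtain ⟨hP2p, hvP2⟩ := hrevpath
        have hsubP2 : ∀ z ∈ P2.support, z ∈ P1.support := by
          intro z hz
          have : z ∈ P1.reverse.support := by
            rw [hrev, Walk.support_cons]; exact List.mem_cons_of_mem _ hz
          rwa [Walk.support_reverse, List.mem_reverse] at this
        have hmemV' : ∀ z ∈ P2.support, z ∈ V' := by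
          intro z hz
          exact ⟨fun h => huP1 (h ▸ hsubP2 z hz), fun h => hvP2 (h ▸ hz)⟩
        set Q := P2.reverse with hQ
        have hQsup : ∀ z ∈ Q.support, z ∈ P2.support := by
          intro z hz; rwa [hQ, Walk.support_reverse, List.mem_reverse] at hz
        have hcV' : c ∈ V' := ⟨hcu, hcv⟩
        have hdV' : d ∈ V' := hmemV' d P2.start_mem_support
        obtain ⟨Q', hQ'⟩ := exists_lift_induce (t := V') Q hcV' hdV'
          (fun z hz => hmemV' z (hQsup z hz))
        have hcA : (⟨c, hcV'⟩ : ↥V') ∈ A := by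
          rw [hA, Finset.mem_filter]; exact ⟨Finset.mem_univ _, h1⟩
        have hdB : (⟨d, hdV'⟩ : ↥V') ∈ B := by
          rw [hB, Finset.mem_filter]; exact ⟨Finset.mem_univ _, h2⟩
        obtain ⟨z', hz'S, hz'⟩ := hS' hcA hdB Q'
        have hz'Q : (z' : V) ∈ Q.support := hQ' z' hz'
        have hz'P : (z' : V) ∈ P1.support := hsubP2 _ (hQsup _ hz'Q)
        have hz'S2 : (z' : V) ∈ S := Finset.mem_image_of_mem _ hz'S
        exact hPa _ (by rw [Walk.support_cons]; exact List.mem_cons_of_mem _ hz'P) hz'S2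
    exact key w.bypass w.bypass_isPath
      (fun z hz hzS => hcon z hzS (w.support_bypass_subset hz))
  obtain ⟨a, b, p, ha, hb, hp, hdisj⟩ := setMenger G₂ A B k hsep'
  let ι : G₂ →g G := ⟨Subtype.val, fun {a' b'} h => h⟩
  have hι : Function.Injective ι := Subtype.val_injective
  have hadjA : ∀ i, G.Adj u ↑(a i) := fun i => (Finset.mem_filter.mp (ha i)).2
  have hadjB : ∀ i, G.Adj ↑(b i) v := fun i => ((Finset.mem_filter.mp (hb i)).2).symm
  have hmsup : ∀ i z, z ∈ ((p i).map ι).support ↔ ∃ z' ∈ (p i).support, (z' : V) = z := by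
    intro i z
    rw [Walk.support_map, List.mem_map]
    exact ⟨fun ⟨a', h1, h2⟩ => ⟨a', h1, h2⟩, fun ⟨a', h1, h2⟩ => ⟨a', h1, h2⟩⟩
  have hmV' : ∀ i z, z ∈ ((p i).map ι).support → z ≠ u ∧ z ≠ v := by
    intro i z hz
    obtain ⟨z', _, rfl⟩ := (hmsup i z).mp hz
    exact z'.prop
  have hconcatsup : ∀ i z, z ∈ (((p i).map ι).concat (hadjB i)).support ↔
      z ∈ ((p i).map ι).support ∨ z = v := by
    intro i z
    rw [Walk.support_concat, List.mem_append, List.mem_singleton]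
  refine ⟨fun i => Walk.cons (hadjA i) (((p i).map ι).concat (hadjB i)), ?_, ?_⟩
  · intro i
    rw [Walk.cons_isPath_iff]
    constructor
    · rw [Walk.concat_eq_append]
      refine isPath_append (Walk.map_isPath_of_injective hι (hp i)) ?_ ?_
      · rw [Walk.cons_isPath_iff]
        refine ⟨Walk.IsPath.nil, fun h => ?_⟩
        rw [Walk.support_nil, List.mem_singleton] at h
        exact (hmV' i _ (Walk.end_mem_support _)).2 h
      · intro z hz hz'
        rw [Walk.support_cons, Walk.support_nil, List.mem_cons, List.mem_singleton] at hz'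
        rcases hz' with hz' | hz'
        · exact hz'
        · exact absurd hz' (hmV' i z hz).2
    · intro h
      rw [hconcatsup] at h
      rcases h with h | h
      · exact (hmV' i u h).1 rfl
      · exact huv h
  · intro i j hij z hzi hzj
    rw [Walk.support_cons, List.mem_cons] at hzi hzj
    rcases hzi with rfl | hzi
    · exact Or.inl rfl
    rcases hzj with hzj' | hzj
    · exact Or.inl hzj'
    rw [hconcatsup] at hzi hzj
    rcases hzi with h | hzv
    · rcases hzj with h' | hzv'
      · exfalso
        obtain ⟨z1, hz1, hz1e⟩ := (hmsup i z).mp h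
        obtain ⟨z2, hz2, hz2e⟩ := (hmsup j z).mp h'
        have hzz : z1 = z2 := Subtype.val_injective (hz1e.trans hz2e.symm)
        exact hdisj i j hij z1 hz1 (hzz ▸ hz2)
      · exact Or.inr hzv'
    · exact Or.inr hzv

/-- From connectivity of the induced graph on the complement of `S'`, extract a
walk between two vertices outside `S'` avoiding `S'`. -/
lemma walk_avoiding {G : SimpleGraph V} (S' : Finset V)
    (hconn : (G.induce ((↑S' : Set V)ᶜ)).Connected) {w t : V} (hw : w ∉ S') (ht : t ∉ S') :
    ∃ W : G.Walk w t, ∀ z ∈ W.support, z ∉ S' := by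
  have hw2 : w ∈ ((↑S' : Set V)ᶜ) := by simpa using hw
  have ht2 : t ∈ ((↑S' : Set V)ᶜ) := by simpa using ht
  obtain ⟨W0⟩ := hconn.preconnected ⟨w, hw2⟩ ⟨t, ht2⟩
  let ι : G.induce ((↑S' : Set V)ᶜ) →g G := ⟨Subtype.val, fun h => h⟩
  refine ⟨W0.map ι, ?_⟩
  intro z hz
  rw [Walk.support_map, List.mem_map] at hz
  obtain ⟨z', _, rfl⟩ := hz
  exact fun hmem => z'.2 (Finset.mem_coe.mpr hmem)

end Fin

end MengerAux
/-- Whitney/Menger: a graph with at least `k+1` vertices is `k`-connected if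
and only if every pair of distinct vertices is joined by `k` pairwise
internally disjoint paths. -/
theorem whitney_menger {V : Type*} [Fintype V] (k : ℕ) (G : SimpleGraph V)
    (hcard : k + 1 ≤ Fintype.card V) :
    KConnected k G ↔
      ∀ u v : V, u ≠ v → ∃ P : Fin k → G.Walk u v,
        (∀ i, (P i).IsPath) ∧
        ∀ i j, i ≠ j →
          ∀ x, x ∈ (P i).support → x ∈ (P j).support → x = u ∨ x = v := by
  classical
  constructor
  · intro hKC u v huv
    by_cases hadj : G.Adj u v
    · -- adjacent case
      cases k with
      | zero => exact ⟨fun i => i.elim0, fun i => i.elim0, fun i => i.elim0⟩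
      | succ m =>
        set G₂ := G.deleteEdges {s(u, v)} with hG₂
        have hnadj : ¬G₂.Adj u v := by
          rw [hG₂, SimpleGraph.deleteEdges_adj]
          exact fun h => h.2 rfl
        have hsep₂ : ∀ S : Finset V, u ∉ S → v ∉ S →
            (∀ w : G₂.Walk u v, ∃ z ∈ S, z ∈ w.support) → m ≤ S.card := by
          intro S huS hvS hsepS
          by_contra hlt
          push_neg at hlt
          have h1 : (insert v S).card < m + 1 := by
            have := Finset.card_insert_le v S; omega
          have h2 : (insert u S).card < m + 1 := by
            have := Finset.card_insert_le u S; omega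
          have hvu : v ∉ insert u S := by
            rw [Finset.mem_insert]; rintro (rfl | h); exact huv rfl; exact hvS h
          have huv' : u ∉ insert v S := by
            rw [Finset.mem_insert]; rintro (rfl | h); exact huv rfl; exact huS h
          obtain ⟨w, hw⟩ : ∃ w, w ∉ insert u (insert v S) := by
            by_contra hall
            push_neg at hall
            have hQ : insert u (insert v S) = Finset.univ := Finset.eq_univ_iff_forall.mpr hall
            have h3 := Finset.card_insert_le u (insert v S)
            have h4 := Finset.card_insert_le v S
            have h5 : (insert u (insert v S)).card = Fintype.card V := by
              rw [hQ, Finset.card_univ]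
            omega
          rw [Finset.mem_insert, Finset.mem_insert] at hw
          push_neg at hw
          obtain ⟨hwu, hwv, hwS⟩ := hw
          -- walk from w to v avoiding `insert u S`, and from w to u avoiding `insert v S`
          obtain ⟨W1, hW1⟩ := MengerAux.walk_avoiding (w := w) (t := v) (insert u S)
            (hKC.2 (insert u S) h2) (by rw [Finset.mem_insert]; tauto) hvu
          obtain ⟨W2, hW2⟩ := MengerAux.walk_avoiding (w := w) (t := u) (insert v S)
            (hKC.2 (insert v S) h1) (by rw [Finset.mem_insert]; tauto) huv'
          have hW1u : ∀ z ∈ W1.support, z ≠ u :=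
            fun z hz h => hW1 z hz (h ▸ Finset.mem_insert_self u S)
          have hW2v : ∀ z ∈ W2.support, z ≠ v :=
            fun z hz h => hW2 z hz (h ▸ Finset.mem_insert_self v S)
          have hW1e : ∀ f ∈ W1.edges, f ∈ G₂.edgeSet := by
            intro f hf
            rw [hG₂, SimpleGraph.edgeSet_deleteEdges]
            refine ⟨W1.edges_subset_edgeSet hf, ?_⟩
            rintro rfl
            exact hW1u u (W1.fst_mem_support_of_mem_edges hf) rfl
          have hW2e : ∀ f ∈ W2.edges, f ∈ G₂.edgeSet := by
            intro f hf
            rw [hG₂, SimpleGraph.edgeSet_deleteEdges]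
            refine ⟨W2.edges_subset_edgeSet hf, ?_⟩
            rintro rfl
            exact hW2v v (W2.snd_mem_support_of_mem_edges hf) rfl
          obtain ⟨z, hzS, hz⟩ := hsepS
            (((W2.transfer G₂ hW2e).reverse).append (W1.transfer G₂ hW1e))
          rw [SimpleGraph.Walk.mem_support_append_iff, SimpleGraph.Walk.support_reverse, List.mem_reverse,
            SimpleGraph.Walk.support_transfer, SimpleGraph.Walk.support_transfer] at hz
          rcases hz with hz | hz
          · exact hW2 z hz (Finset.mem_insert_of_mem hzS)
          · exact hW1 z hz (Finset.mem_insert_of_mem hzS)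
        obtain ⟨P', hP'p, hP'd⟩ := MengerAux.local_menger huv hnadj m hsep₂
        have hedges : ∀ i, ∀ f ∈ (P' i).edges, f ∈ G.edgeSet := by
          intro i f hf
          have := (P' i).edges_subset_edgeSet hf
          rw [hG₂, SimpleGraph.edgeSet_deleteEdges] at this
          exact this.1
        refine ⟨Fin.cases (SimpleGraph.Walk.cons hadj SimpleGraph.Walk.nil) (fun i => (P' i).transfer G (hedges i)),
          ?_, ?_⟩
        · intro i
          refine Fin.cases ?_ (fun i' => ?_) i
          · simp only [Fin.cases_zero]
            rw [SimpleGraph.Walk.cons_isPath_iff]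
            refine ⟨SimpleGraph.Walk.IsPath.nil, ?_⟩
            rw [SimpleGraph.Walk.support_nil, List.mem_singleton]
            exact huv
          · simp only [Fin.cases_succ]
            exact (hP'p i').transfer _
        · intro i j hij x hxi hxj
          have hedge : ∀ (y : V), y ∈ (SimpleGraph.Walk.cons hadj (SimpleGraph.Walk.nil : G.Walk v v)).support →
              y = u ∨ y = v := by
            intro y hy
            rw [SimpleGraph.Walk.support_cons, SimpleGraph.Walk.support_nil, List.mem_cons, List.mem_singleton] at hy
            exact hy
          rcases Fin.eq_zero_or_eq_succ i with rfl | ⟨i', rfl⟩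
          · simp only [Fin.cases_zero] at hxi
            exact hedge x hxi
          rcases Fin.eq_zero_or_eq_succ j with rfl | ⟨j', rfl⟩
          · simp only [Fin.cases_zero] at hxj
            exact hedge x hxj
          simp only [Fin.cases_succ, SimpleGraph.Walk.support_transfer] at hxi hxj
          exact hP'd i' j' (fun h => hij (h ▸ rfl)) x hxi hxj
    · -- non-adjacent case
      apply MengerAux.local_menger huv hadj k
      intro S huS hvS hsepS
      by_contra hlt
      push_neg at hlt
      obtain ⟨W, hW⟩ := MengerAux.walk_avoiding S (hKC.2 S hlt) huS hvS
      obtain ⟨z, hzS, hz⟩ := hsepS W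
      exact hW z hz hzS
  · intro hRHS
    refine ⟨hcard, ?_⟩
    intro s hs
    rw [SimpleGraph.connected_iff]
    constructor
    · rintro ⟨aa, haa⟩ ⟨bb, hbb⟩
      have haa' : aa ∉ s := fun h => haa (Finset.mem_coe.mpr h)
      have hbb' : bb ∉ s := fun h => hbb (Finset.mem_coe.mpr h)
      by_cases hab : aa = bb
      · subst hab
        exact SimpleGraph.Reachable.refl _
      · obtain ⟨P, hPp, hPd⟩ := hRHS aa bb hab
        have hgood : ∃ i, ∀ z ∈ (P i).support, z ∉ s := by
          by_contra hbad
          push_neg at hbad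
          choose f hf1 hf2 using hbad
          have hinj : Function.Injective f := by
            intro i j hij'
            by_contra hne
            have := hPd i j hne (f i) (hf1 i) (hij' ▸ hf1 j)
            rcases this with h | h
            · exact haa' (h ▸ hf2 i)
            · exact hbb' (h ▸ hf2 i)
          have hkle : k ≤ s.card := by
            have := Finset.card_le_card_of_injOn (s := Finset.univ) (t := s) f
              (fun i _ => hf2 i) (fun i _ j _ h => hinj h)
            simpa using this
          omega
        obtain ⟨i, hi⟩ := hgood
        obtain ⟨W', _⟩ := MengerAux.exists_lift_induce (t := ((↑s : Set V)ᶜ)) (P i) haa hbb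
          (fun z hz h => hi z hz (Finset.mem_coe.mp h))
        exact ⟨W'⟩
    · obtain ⟨x, hx⟩ : ∃ x, x ∉ s := by
        by_contra hall
        push_neg at hall
        have hQ : s = Finset.univ := Finset.eq_univ_iff_forall.mpr hall
        have : s.card = Fintype.card V := by rw [hQ, Finset.card_univ]
        omega
      exact ⟨⟨x, fun h => hx (Finset.mem_coe.mp h)⟩⟩
end

section
/- Let G be a two-connected graph on [n] such that vertex n is not adjacent to some vertex in [n-1]. Then there exist a vertex a ∈ [n-1] that is not a neighbor of n and two internally disjoint paths from a to n, each meeting the neighborhood N_G(n) in exactly one vertex; in particular G has a (G,n)-permissible edge (a pair of distinct vertices in N_G(n) arising as those intersection vertices). -/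
open scoped Classical

/-- From a walk ending at `t` starting at a non-neighbour of `t`, extract an
initial segment ending at the first neighbour of `t` encountered. -/
lemma first_adj {V : Type*} {G : SimpleGraph V} {t x : V}
    (W : G.Walk x t) (hx : ¬ G.Adj t x) :
    x = t ∨ ∃ (u : V) (P : G.Walk x u), G.Adj t u ∧ t ∉ P.support ∧
      (∀ y ∈ P.support, G.Adj t y → y = u) ∧ P.support ⊆ W.support := by
  induction W with
  | nil => exact Or.inl rfl
  | @cons x y t h W ih =>
    by_cases hxt : x = t
    · exact Or.inl hxt
    right
    by_cases hy : G.Adj t y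
    · refine ⟨y, SimpleGraph.Walk.cons h .nil, hy, ?_, ?_, ?_⟩
      · simp only [SimpleGraph.Walk.support_cons, SimpleGraph.Walk.support_nil,
          List.mem_cons, List.mem_singleton]
        rintro (rfl | rfl | h')
        · exact hxt rfl
        · exact G.irrefl hy
        · exact (List.not_mem_nil h')
      · intro z hz hadj
        simp only [SimpleGraph.Walk.support_cons, SimpleGraph.Walk.support_nil,
          List.mem_cons, List.mem_singleton] at hz
        rcases hz with rfl | rfl | h'
        · exact absurd hadj hx
        · rfl
        · exact absurd h' List.not_mem_nil
      · intro z hz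
        simp only [SimpleGraph.Walk.support_cons, SimpleGraph.Walk.support_nil,
          List.mem_cons, List.mem_singleton] at hz ⊢
        rcases hz with rfl | rfl | h'
        · exact Or.inl rfl
        · exact Or.inr W.start_mem_support
        · exact absurd h' List.not_mem_nil
    · rcases ih hy with rfl | ⟨u, P, hu, htP, hcond, hsub⟩
      · exact absurd h.symm hx
      refine ⟨u, SimpleGraph.Walk.cons h P, hu, ?_, ?_, ?_⟩
      · simp only [SimpleGraph.Walk.support_cons, List.mem_cons]
        rintro (rfl | hmem)
        · exact hxt rfl
        · exact htP hmem
      · intro z hz hadj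
        simp only [SimpleGraph.Walk.support_cons, List.mem_cons] at hz
        rcases hz with rfl | hmem
        · exact absurd hadj hx
        · exact hcond z hmem hadj
      · intro z hz
        simp only [SimpleGraph.Walk.support_cons, List.mem_cons] at hz ⊢
        rcases hz with rfl | hmem
        · exact Or.inl rfl
        · exact Or.inr (hsub hmem)

/-- From a walk ending in a set `S`, extract an initial segment ending at the
first vertex of `S` encountered. -/
lemma first_mem {V : Type*} {G : SimpleGraph V} {x w : V} (S : Set V)
    (R : G.Walk x w) (hw : w ∈ S) :
    ∃ (a : V) (R' : G.Walk x a), a ∈ S ∧ (∀ y ∈ R'.support, y ∈ S → y = a) ∧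
      R'.support ⊆ R.support := by
  induction R with
  | nil =>
    exact ⟨_, .nil, hw, fun y hy _ => by simpa using hy, by simp⟩
  | @cons x y w h R ih =>
    by_cases hx : x ∈ S
    · refine ⟨x, .nil, hx, ?_, ?_⟩
      · intro z hz _; simpa using hz
      · intro z hz
        simp only [SimpleGraph.Walk.support_nil, List.mem_singleton] at hz
        simp [hz]
    · obtain ⟨a, R', ha, hcond, hsub⟩ := ih hw
      refine ⟨a, SimpleGraph.Walk.cons h R', ha, ?_, ?_⟩
      · intro z hz hzS
        simp only [SimpleGraph.Walk.support_cons, List.mem_cons] at hz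
        rcases hz with rfl | hmem
        · exact absurd hzS hx
        · exact hcond z hmem hzS
      · intro z hz
        simp only [SimpleGraph.Walk.support_cons, List.mem_cons] at hz ⊢
        rcases hz with rfl | hmem
        · exact Or.inl rfl
        · exact Or.inr (hsub hmem)

/-- If `G` is a two-connected graph on `[n+1]` whose last vertex is not
adjacent to some other vertex, then there is a non-neighbour `a` of the last
vertex and two internally disjoint paths from `a` to the last vertex, each
meeting the neighbourhood of the last vertex in exactly one vertex; the two
intersection vertices form a `(G,n)`-permissible edge. -/
theorem exists_permissible_edge (n : ℕ) (G : SimpleGraph (Fin (n + 1)))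
    (hG : TwoConnected G)
    (h : ∃ w : Fin (n + 1), w ≠ Fin.last n ∧ ¬ G.Adj (Fin.last n) w) :
    ∃ a : Fin (n + 1), a ≠ Fin.last n ∧ ¬ G.Adj (Fin.last n) a ∧
      ∃ (p q : G.Walk a (Fin.last n)), p.IsPath ∧ q.IsPath ∧
        (∀ x, x ∈ p.support → x ∈ q.support → x = a ∨ x = Fin.last n) ∧
        ∃ u v : Fin (n + 1), u ≠ v ∧
          G.Adj (Fin.last n) u ∧ G.Adj (Fin.last n) v ∧
          u ∈ p.support ∧ (∀ x, x ∈ p.support → G.Adj (Fin.last n) x → x = u) ∧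
          v ∈ q.support ∧ (∀ x, x ∈ q.support → G.Adj (Fin.last n) x → x = v) := by
  classical
  obtain ⟨w, hwt, hwa⟩ := h
  set t : Fin (n + 1) := Fin.last n with ht
  -- a walk from w to t
  obtain ⟨W1⟩ := hG.1.preconnected w t
  rcases first_adj W1 hwa with rfl | ⟨u, P, hu, htP, hPcond, _⟩
  · exact absurd rfl hwt
  -- a walk from w to t avoiding u
  have hwu : w ≠ u := fun hh => hwa (hh ▸ hu)
  have htu : t ≠ u := G.ne_of_adj hu
  have hwmem : w ∈ ({u}ᶜ : Set (Fin (n + 1))) := by simpa using hwu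
  have htmem : t ∈ ({u}ᶜ : Set (Fin (n + 1))) := by simpa using htu
  obtain ⟨W2'⟩ := (hG.2 u).preconnected ⟨w, hwmem⟩ ⟨t, htmem⟩
  let W2 : G.Walk w t := W2'.map (SimpleGraph.Embedding.induce ({u}ᶜ : Set (Fin (n + 1)))).toHom
  have hW2u : u ∉ W2.support := by
    intro hmem
    rw [show W2.support = _ from SimpleGraph.Walk.support_map _ _] at hmem
    obtain ⟨b, _, hb⟩ := List.mem_map.mp hmem
    exact b.2 (by simpa using hb)
  rcases first_adj W2 hwa with rfl | ⟨v, Q, hv, htQ, hQcond, hQsub⟩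
  · exact absurd rfl hwt
  have hQu : ∀ y ∈ Q.support, y ≠ u := fun y hy hyu => hW2u (hyu ▸ hQsub hy)
  have huv : u ≠ v := fun hh => hQu v Q.end_mem_support hh.symm
  -- make them paths
  let Phat := P.toPath
  let Qhat := Q.toPath
  have hPhat_sub : (Phat : G.Walk w u).support ⊆ P.support := P.support_toPath_subset
  have hQhat_sub : (Qhat : G.Walk w v).support ⊆ Q.support := Q.support_toPath_subset
  -- first vertex of Qhat on Phat, walking from u
  obtain ⟨a, R0, haQ, hR0cond, hR0sub⟩ :=
    first_mem {y | y ∈ (Qhat : G.Walk w v).support} (Phat : G.Walk w u).reverse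
      (Qhat : G.Walk w v).start_mem_support
  have hR0subP : R0.support ⊆ (Phat : G.Walk w u).support := by
    intro z hz
    have := hR0sub hz
    rwa [SimpleGraph.Walk.support_reverse, List.mem_reverse] at this
  have haP : a ∈ P.support := hPhat_sub (hR0subP R0.end_mem_support)
  have hau : a ≠ u := hQu a (hQhat_sub haQ)
  have hta : ¬ G.Adj t a := fun hadj => hau (hPcond a haP hadj)
  have hat : a ≠ t := by
    intro hh
    exact htQ (hh ▸ hQhat_sub haQ)
  -- the two path pieces
  let R0' := R0.toPath
  have hR0'sub : (R0' : G.Walk u a).support ⊆ R0.support := R0.support_toPath_subset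
  have haQhat : a ∈ (Qhat : G.Walk w v).support := haQ
  let Q1 : G.Walk a v := (Qhat : G.Walk w v).dropUntil a haQhat
  have hQ1path : Q1.IsPath := Qhat.2.dropUntil haQhat
  have hQ1sub : Q1.support ⊆ (Qhat : G.Walk w v).support :=
    SimpleGraph.Walk.support_dropUntil_subset _ haQhat
  have htR0' : t ∉ (R0' : G.Walk u a).support := fun hh =>
    htP (hPhat_sub (hR0subP (hR0'sub hh)))
  have htQ1 : t ∉ Q1.support := fun hh => htQ (hQhat_sub (hQ1sub hh))
  -- build the two walks a → t
  have htu' : G.Adj t u := hu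
  have htv' : G.Adj t v := hv
  let p : G.Walk a t := (SimpleGraph.Walk.cons htu' (R0' : G.Walk u a)).reverse
  let q : G.Walk a t := (SimpleGraph.Walk.cons htv' Q1.reverse).reverse
  have hpsupp : ∀ x, x ∈ p.support ↔ x = t ∨ x ∈ (R0' : G.Walk u a).support := by
    intro x
    have hmem := (R0' : G.Walk u a).start_mem_support
    simp only [p, SimpleGraph.Walk.support_reverse, List.mem_reverse,
      SimpleGraph.Walk.support_cons, List.mem_cons]
  have hqsupp : ∀ x, x ∈ q.support ↔ x = t ∨ x ∈ Q1.support := by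
    intro x
    have hmem := Q1.end_mem_support
    simp only [q, SimpleGraph.Walk.support_reverse, List.mem_reverse,
      SimpleGraph.Walk.support_cons, List.mem_cons]
  refine ⟨a, hat, hta, p, q, ?_, ?_, ?_, u, v, huv, hu, hv, ?_, ?_, ?_, ?_⟩
  · rw [SimpleGraph.Walk.isPath_reverse_iff, SimpleGraph.Walk.cons_isPath_iff]
    exact ⟨R0'.2, htR0'⟩
  · rw [SimpleGraph.Walk.isPath_reverse_iff, SimpleGraph.Walk.cons_isPath_iff]
    refine ⟨hQ1path.reverse, ?_⟩
    rw [SimpleGraph.Walk.support_reverse, List.mem_reverse]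
    exact htQ1
  · intro x hxp hxq
    rcases (hpsupp x).mp hxp with rfl | hxp'
    · exact Or.inr rfl
    rcases (hqsupp x).mp hxq with rfl | hxq'
    · exact Or.inr rfl
    exact Or.inl (hR0cond x (hR0'sub hxp') (hQ1sub hxq'))
  · exact (hpsupp u).mpr (Or.inr (R0' : G.Walk u a).start_mem_support)
  · intro x hx hadj
    rcases (hpsupp x).mp hx with rfl | hx'
    · exact absurd hadj (G.irrefl)
    · exact hPcond x (hPhat_sub (hR0subP (hR0'sub hx'))) hadj
  · exact (hqsupp v).mpr (Or.inr Q1.end_mem_support)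
  · intro x hx hadj
    rcases (hqsupp x).mp hx with rfl | hx'
    · exact absurd hadj (G.irrefl)
    · exact hQcond x (hQhat_sub (hQ1sub hx')) hadj
end

section
/- The map Ψ_B on connected graphs on [m], which replaces G by G⊕η_G (symmetric difference of the edge set with the maximal externally active edge η_G) when G has an externally active edge, and fixes G otherwise, is an involution whose fixed points are exactly the increasing trees on [m]. -/
open scoped Classical

/-- The smaller endpoint of an unordered pair. -/
def eMin {m : ℕ} (e : Sym2 (Fin m)) : Fin m :=
  Sym2.lift ⟨fun a b => min a b, fun a b => min_comm a b⟩ e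

/-- The larger endpoint of an unordered pair. -/
def eMax {m : ℕ} (e : Sym2 (Fin m)) : Fin m :=
  Sym2.lift ⟨fun a b => max a b, fun a b => max_comm a b⟩ e

/-- The lexicographic (strict) order on edges:
`{i,j} < {k,l}` iff `min{i,j} < min{k,l}`, or the minima agree and
`max{i,j} < max{k,l}`. -/
def edgeLt {m : ℕ} (e f : Sym2 (Fin m)) : Prop :=
  eMin e < eMin f ∨ (eMin e = eMin f ∧ eMax e < eMax f)

/-- The spanning subgraph `G^{>e}` of `G` consisting of the edges strictly
greater than `e` in the lexicographic order. -/
def gtSubgraph {m : ℕ} (G : SimpleGraph (Fin m)) (e : Sym2 (Fin m)) :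
    SimpleGraph (Fin m) where
  Adj a b := G.Adj a b ∧ edgeLt e s(a, b)
  symm := ⟨fun a b hab => by
    refine ⟨hab.1.symm, ?_⟩
    have := hab.2
    rwa [Sym2.eq_swap] at this⟩
  loopless := ⟨fun a ha => G.loopless.irrefl a ha.1⟩

/-- An edge `e ∈ [m]^(2)` is externally active for `G` if there is a path in
`G^{>e}` between the endpoints of `e`. -/
def ExtActive {m : ℕ} (G : SimpleGraph (Fin m)) (e : Sym2 (Fin m)) : Prop :=
  ∃ a b : Fin m, e = s(a, b) ∧ a ≠ b ∧ (gtSubgraph G e).Reachable a b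

/-- `G ⊕ e`: the graph whose edge set is the symmetric difference of the edge
set of `G` with `{e}`. -/
def oplus {m : ℕ} (G : SimpleGraph (Fin m)) (e : Sym2 (Fin m)) :
    SimpleGraph (Fin m) :=
  SimpleGraph.fromEdgeSet (symmDiff G.edgeSet {e})

/-- An increasing tree on `[m]` (root `0`): a labelled tree in which every
vertex other than the root is adjacent to exactly one vertex with a smaller
label; equivalently, labels increase along every path from the root to a
leaf. -/
def IncreasingTree {m : ℕ} (G : SimpleGraph (Fin (m + 1))) : Prop :=
  G.IsTree ∧ ∀ v : Fin (m + 1), v ≠ 0 → ∃! u : Fin (m + 1), G.Adj v u ∧ u < v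


namespace Bernardi

open SimpleGraph

variable {n : ℕ}

@[simp] lemma eMin_mk (a b : Fin n) : eMin s(a,b) = min a b := rfl
@[simp] lemma eMax_mk (a b : Fin n) : eMax s(a,b) = max a b := rfl

lemma sym2_eq (e : Sym2 (Fin n)) : s(eMin e, eMax e) = e := by
  induction e using Sym2.ind with
  | _ a b =>
    rcases le_total a b with h | h
    · simp [min_eq_left h, max_eq_right h]
    · rw [eMin_mk, eMax_mk, min_eq_right h, max_eq_left h, Sym2.eq_swap]

lemma edgeLt_irrefl (e : Sym2 (Fin n)) : ¬ edgeLt e e := by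
  rintro (h | ⟨h1, h2⟩)
  · exact lt_irrefl _ h
  · exact lt_irrefl _ h2

lemma edgeLt_asymm {e f : Sym2 (Fin n)} (h : edgeLt e f) : ¬ edgeLt f e := by
  rcases h with h | ⟨h1, h2⟩ <;> rintro (h' | ⟨h1', h2'⟩)
  · exact lt_asymm h h'
  · exact absurd h1' (ne_of_gt h)
  · exact absurd h1 (ne_of_gt h')
  · exact lt_asymm h2 h2'

lemma edgeLt_total {e f : Sym2 (Fin n)} (h : e ≠ f) : edgeLt e f ∨ edgeLt f e := by
  rcases lt_trichotomy (eMin e) (eMin f) with h1 | h1 | h1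
  · exact Or.inl (Or.inl h1)
  · rcases lt_trichotomy (eMax e) (eMax f) with h2 | h2 | h2
    · exact Or.inl (Or.inr ⟨h1, h2⟩)
    · exact absurd (by rw [← sym2_eq e, ← sym2_eq f, h1, h2]) h
    · exact Or.inr (Or.inr ⟨h1.symm, h2⟩)
  · exact Or.inr (Or.inl h1)

lemma mem_gt_edgeSet {G : SimpleGraph (Fin n)} {e g : Sym2 (Fin n)}
    (hg : g ∈ G.edgeSet) (hlt : edgeLt e g) : g ∈ (gtSubgraph G e).edgeSet := by
  induction g using Sym2.ind with
  | _ a b => exact ⟨hg, hlt⟩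

lemma gt_le {G : SimpleGraph (Fin n)} {e : Sym2 (Fin n)} : gtSubgraph G e ≤ G :=
  fun _ _ h => h.1

lemma oplus_adj {G : SimpleGraph (Fin n)} {η : Sym2 (Fin n)} {a b : Fin n} :
    (oplus G η).Adj a b ↔ (s(a,b) ∈ symmDiff G.edgeSet {η}) ∧ a ≠ b :=
  SimpleGraph.fromEdgeSet_adj _

lemma edgeSet_oplus {G : SimpleGraph (Fin n)} {η : Sym2 (Fin n)} (hη : ¬ η.IsDiag) :
    (oplus G η).edgeSet = symmDiff G.edgeSet {η} := by
  rw [oplus, SimpleGraph.edgeSet_fromEdgeSet]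
  ext g
  simp only [Set.mem_diff, Set.mem_setOf_eq, and_iff_left_iff_imp]
  intro hg
  rcases hg with ⟨hg, -⟩ | ⟨hg, -⟩
  · exact SimpleGraph.not_isDiag_of_mem_edgeSet G hg
  · rw [Set.mem_singleton_iff] at hg; rw [hg]; exact hη

lemma oplus_oplus {G : SimpleGraph (Fin n)} {η : Sym2 (Fin n)} (hη : ¬ η.IsDiag) :
    oplus (oplus G η) η = G := by
  have h1 : (oplus G η).edgeSet = symmDiff G.edgeSet {η} := edgeSet_oplus hη
  rw [oplus, h1, symmDiff_symmDiff_cancel_right, SimpleGraph.fromEdgeSet_edgeSet]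

lemma gt_oplus {G : SimpleGraph (Fin n)} {η f : Sym2 (Fin n)} (h : ¬ edgeLt f η) :
    gtSubgraph (oplus G η) f = gtSubgraph G f := by
  ext a b
  show (oplus G η).Adj a b ∧ edgeLt f s(a,b) ↔ G.Adj a b ∧ edgeLt f s(a,b)
  constructor
  · rintro ⟨ha, hlt⟩
    refine ⟨?_, hlt⟩
    rcases oplus_adj.mp ha with ⟨hm, hne⟩
    have hne' : s(a,b) ≠ η := by rintro rfl; exact h hlt
    rcases hm with ⟨hm, -⟩ | ⟨hm, -⟩
    · exact hm
    · exact absurd (Set.mem_singleton_iff.mp hm) hne'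
  · rintro ⟨ha, hlt⟩
    refine ⟨?_, hlt⟩
    have hne' : s(a,b) ≠ η := by rintro rfl; exact h hlt
    exact oplus_adj.mpr ⟨Or.inl ⟨ha, hne'⟩, ha.ne⟩

lemma extActive_congr {G G' : SimpleGraph (Fin n)} {e : Sym2 (Fin n)}
    (h : gtSubgraph G e = gtSubgraph G' e) : ExtActive G e ↔ ExtActive G' e := by
  unfold ExtActive
  rw [h]

lemma walk_reach {H G : SimpleGraph (Fin n)} {x y : Fin n}
    (hxy : H.Reachable x y) (hcov : ∀ a b, G.Adj a b → H.Adj a b ∨ s(a,b) = s(x,y)) :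
    ∀ {u v : Fin n}, G.Walk u v → H.Reachable u v := by
  intro u v p
  induction p with
  | nil => exact Reachable.refl _
  | cons hadj p ih =>
    refine Reachable.trans ?_ ih
    rcases hcov _ _ hadj with h' | h'
    · exact h'.reachable
    · rw [Sym2.eq_iff] at h'
      rcases h' with ⟨rfl, rfl⟩ | ⟨rfl, rfl⟩
      · exact hxy
      · exact hxy.symm

lemma conn_oplus {G : SimpleGraph (Fin n)} {η : Sym2 (Fin n)}
    (hG : G.Connected) (hext : ExtActive G η) : (oplus G η).Connected := by
  by_cases hmem : η ∈ G.edgeSet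
  · obtain ⟨x, y, rfl, hne, hreach⟩ := hext
    have hle : gtSubgraph G s(x,y) ≤ oplus G s(x,y) := by
      intro a b hab
      have hne' : s(a,b) ≠ s(x,y) := by
        intro heq
        exact edgeLt_irrefl _ (heq ▸ hab.2)
      exact oplus_adj.mpr ⟨Or.inl ⟨hab.1, hne'⟩, hab.1.ne⟩
    have hxy : (oplus G s(x,y)).Reachable x y := hreach.mono hle
    have hcov : ∀ a b, G.Adj a b → (oplus G s(x,y)).Adj a b ∨ s(a,b) = s(x,y) := by
      intro a b hab
      by_cases h : s(a,b) = s(x,y)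
      · exact Or.inr h
      · exact Or.inl (oplus_adj.mpr ⟨Or.inl ⟨hab, h⟩, hab.ne⟩)
    have : Nonempty (Fin n) := hG.nonempty
    refine SimpleGraph.Connected.mk ?_
    intro u v
    exact (hG.preconnected u v).elim (fun p => walk_reach hxy hcov p)
  · have hle : G ≤ oplus G η := by
      intro a b hab
      have : s(a,b) ≠ η := fun h => hmem (h ▸ hab)
      exact oplus_adj.mpr ⟨Or.inl ⟨hab, this⟩, hab.ne⟩
    exact hG.mono hle


lemma lastEdge {G : SimpleGraph (Fin n)} :
    ∀ {w x : Fin n} (q : G.Walk w x), q.support.Nodup → ∀ f, f ∈ q.edges → x ∈ f →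
      ∃ u, ∃ r : G.Walk w u, q.edges = r.edges ++ [f] ∧ f = s(u, x) := by
  intro w x q
  induction q with
  | nil => intro _ f hf _; simp at hf
  | @cons a b c hadj q' ih =>
    intro hnd f hf hx
    rw [SimpleGraph.Walk.support_cons, List.nodup_cons] at hnd
    rw [SimpleGraph.Walk.edges_cons, List.mem_cons] at hf
    rcases hf with rfl | hf
    · rw [Sym2.mem_iff] at hx
      rcases hx with rfl | rfl
      · exact absurd q'.end_mem_support hnd.1
      · have hq' : q' = SimpleGraph.Walk.nil := by
          rw [← SimpleGraph.Walk.isPath_iff_eq_nil, SimpleGraph.Walk.isPath_def]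
          exact hnd.2
        subst hq'
        exact ⟨a, SimpleGraph.Walk.nil, by simp, rfl⟩
    · obtain ⟨u, r, hre, hfeq⟩ := ih hnd.2 f hf hx
      exact ⟨u, SimpleGraph.Walk.cons hadj r, by simp [hre], hfeq⟩

/-- a cycle yields an externally active edge -/
lemma cycle_active {G : SimpleGraph (Fin n)} {v : Fin n} {c : G.Walk v v}
    (hc : c.IsCycle) : ∃ e, ExtActive G e := by
  classical
  -- choose the minimal edge of the cycle
  have hne : c.edges.toFinset.Nonempty := by
    rw [List.toFinset_nonempty_iff]
    intro h
    have := hc.three_le_length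
    rw [← SimpleGraph.Walk.length_edges, h] at this
    simp at this
  obtain ⟨f0, hf0m, hf0min⟩ := c.edges.toFinset.exists_min_image
    (fun e => toLex (eMin e, eMax e)) hne
  rw [List.mem_toFinset] at hf0m
  have hmin : ∀ g ∈ c.edges, g = f0 ∨ edgeLt f0 g := by
    intro g hg
    rcases (hf0min g (List.mem_toFinset.mpr hg)).lt_or_eq with hlt | heq
    · right
      rcases Prod.Lex.lt_iff.mp hlt with h | ⟨h1, h2⟩
      · exact Or.inl h
      · exact Or.inr ⟨h1, h2⟩
    · left
      have h1 : eMin f0 = eMin g := congrArg (fun p => (ofLex p).1) heq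
      have h2 : eMax f0 = eMax g := congrArg (fun p => (ofLex p).2) heq
      rw [← sym2_eq g, ← sym2_eq f0, h1, h2]
  -- f0 = s(x,y)
  obtain ⟨x, y, rfl⟩ : ∃ x y, f0 = s(x, y) := ⟨_, _, (sym2_eq f0).symm⟩
  have hxs : x ∈ c.support := c.fst_mem_support_of_mem_edges hf0m
  set c' : G.Walk x x := c.rotate x hxs with hc'def
  have hc' : c'.IsCycle := hc.rotate hxs
  have hcedges : ∀ g, g ∈ c'.edges ↔ g ∈ c.edges := fun g =>
    (c.rotate_edges x hxs).mem_iff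
  have hf0c' : s(x,y) ∈ c'.edges := (hcedges _).mpr hf0m
  
  clear_value c'
  cases c' with
  | nil => exact absurd rfl hc'.ne_nil
  | cons hadj q =>
    rename_i w
    rw [SimpleGraph.Walk.cons_isCycle_iff] at hc'
    obtain ⟨hqpath, hxw⟩ := hc'
    -- helper to build activity from a walk with all edges > f
    have build : ∀ (a b : Fin n) (p : G.Walk a b), a ≠ b →
        (∀ g ∈ p.edges, edgeLt s(a,b) g) → s(a,b) ∈ G.edgeSet → ExtActive G s(a,b) := by
      intro a b p hab hgt _
      refine ⟨a, b, rfl, hab, ?_⟩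
      exact ⟨p.transfer _ (fun g hg => mem_gt_edgeSet (p.edges_subset_edgeSet hg) (hgt g hg))⟩
    rw [SimpleGraph.Walk.edges_cons, List.mem_cons] at hf0c'
    rcases hf0c' with heq | hf0q
    · -- f0 is the first edge s(x,w)
      refine ⟨s(x,w), build x w q.reverse hadj.ne ?_ hadj⟩
      intro g hg
      rw [SimpleGraph.Walk.edges_reverse, List.mem_reverse] at hg
      have hgC : g ∈ c.edges := (hcedges g).mp (by
        rw [SimpleGraph.Walk.edges_cons]; exact List.mem_cons_of_mem _ hg)
      rcases hmin g hgC with rfl | hlt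
      · rw [← heq] at hxw; exact absurd hg hxw
      · rwa [heq] at hlt
    · -- f0 ∈ q.edges : use lastEdge
      have hnd : q.support.Nodup := hqpath.support_nodup
      obtain ⟨u, r, hre, hfeq⟩ := lastEdge q hnd s(x,y) hf0q (Sym2.mem_mk_left x y)
      -- walk from x to u : cons hadj r
      have huG : s(u, x) ∈ G.edgeSet := by
        rw [← hfeq]; exact q.edges_subset_edgeSet hf0q
      have hune : u ≠ x := ((SimpleGraph.mem_edgeSet (G := G)).mp huG).ne
      refine ⟨s(u,x), build u x (SimpleGraph.Walk.cons hadj r).reverse hune ?_ huG⟩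
      have hfnr : s(x,y) ∉ r.edges := by
        have := hqpath.edges_nodup
        rw [hre, List.nodup_append] at this
        intro hmem
        exact this.2.2 _ hmem _ (List.mem_singleton_self _) rfl
      intro g hg
      rw [SimpleGraph.Walk.edges_reverse, List.mem_reverse,
        SimpleGraph.Walk.edges_cons, List.mem_cons] at hg
      rw [← hfeq]
      have hgc : g ∈ c.edges := by
        apply (hcedges g).mp
        rw [SimpleGraph.Walk.edges_cons, List.mem_cons]
        rcases hg with rfl | hg
        · exact Or.inl rfl
        · exact Or.inr (by rw [hre]; exact List.mem_append_left _ hg)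
      rcases hmin g hgc with rfl | hlt
      · exfalso
        rcases hg with heq2 | hg
        · exact hxw (heq2 ▸ hf0q)
        · exact hfnr hg
      · exact hlt

lemma eMin_le_eMax (e : Sym2 (Fin n)) : eMin e ≤ eMax e := by
  induction e using Sym2.ind with
  | _ a b => exact min_le_max

lemma up' {T : SimpleGraph (Fin n)}
    (hT : ∀ v : Fin n, ∀ u1 u2, T.Adj v u1 → u1 < v → T.Adj v u2 → u2 < v → u1 = u2) :
    ∀ {z y : Fin n} (p : T.Walk z y), p.support.Nodup → ∀ x, T.Adj x z → x < z →
      x ∉ p.support → z ≤ y := by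
  intro z y p
  induction p with
  | nil => intro _ _ _ _ _; exact le_refl _
  | @cons z w y h2 p' ih =>
    intro hnd x hxz hlt hxs
    rw [SimpleGraph.Walk.support_cons, List.nodup_cons] at hnd
    rw [SimpleGraph.Walk.support_cons, List.mem_cons, not_or] at hxs
    rcases lt_or_gt_of_ne h2.ne' with hwz | hzw
    · exfalso
      have : x = w := hT z x w hxz.symm hlt h2 hwz
      exact hxs.2 (this ▸ p'.start_mem_support)
    · have hwy : w ≤ y := ih hnd.2 z h2 hzw hnd.1
      exact (le_of_lt hzw).trans hwy

lemma no_reach {G : SimpleGraph (Fin n)}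
    (h1 : ∀ v : Fin n, ∀ u1 u2, G.Adj v u1 → u1 < v → G.Adj v u2 → u2 < v → u1 = u2)
    {a b : Fin n} (hab : a < b) : ¬ (gtSubgraph G s(a,b)).Reachable a b := by
  intro hreach
  set H := gtSubgraph G s(a,b) with hH
  have hH1 : ∀ v u1 u2, H.Adj v u1 → u1 < v → H.Adj v u2 → u2 < v → u1 = u2 :=
    fun v u1 u2 k1 l1 k2 l2 => h1 v u1 u2 k1.1 l1 k2.1 l2
  obtain ⟨p0⟩ := hreach
  obtain ⟨p, hp⟩ : ∃ p : H.Walk a b, p.IsPath := ⟨p0.toPath.1, p0.toPath.2⟩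
  cases p with
  | nil => exact lt_irrefl _ hab
  | @cons _ v1 _ h q =>
    rw [SimpleGraph.Walk.cons_isPath_iff] at hp
    have hlt : edgeLt s(a,b) s(a,v1) := h.2
    have hv1 : a < v1 ∧ b < v1 := by
      rcases hlt with hm | ⟨hm1, hm2⟩
      · rw [eMin_mk, eMin_mk, min_eq_left hab.le] at hm
        exact absurd (hm.trans_le (min_le_left a v1)) (lt_irrefl _)
      · rw [eMax_mk, eMax_mk, max_eq_right hab.le] at hm2
        rcases le_or_gt v1 a with hv | hv
        · rw [max_eq_left hv] at hm2
          exact absurd (hab.trans hm2) (lt_irrefl _)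
        · rw [max_eq_right hv.le] at hm2
          exact ⟨hv, hm2⟩
    have := up' hH1 q hp.1.support_nodup a h hv1.1 hp.2
    exact absurd (hv1.2.trans_le this) (lt_irrefl _)

lemma increasing_no_active {G : SimpleGraph (Fin n)}
    (h1 : ∀ v : Fin n, ∀ u1 u2, G.Adj v u1 → u1 < v → G.Adj v u2 → u2 < v → u1 = u2)
    (e : Sym2 (Fin n)) : ¬ ExtActive G e := by
  rintro ⟨a, b, rfl, hne, hr⟩
  rcases hne.lt_or_gt with hab | hba
  · exact no_reach h1 hab hr
  · have hsw : s(a,b) = s(b,a) := Sym2.eq_swap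
    rw [hsw] at hr
    exact no_reach h1 hba hr.symm

lemma two_smaller_active {G : SimpleGraph (Fin n)} {v u1 u2 : Fin n}
    (a1 : G.Adj v u1) (a2 : G.Adj v u2) (h12 : u1 < u2) (h2v : u2 < v) :
    ExtActive G s(u1, u2) := by
  have h1v : u1 < v := h12.trans h2v
  refine ⟨u1, u2, rfl, h12.ne, ?_⟩
  have adj1 : (gtSubgraph G s(u1,u2)).Adj u1 v := by
    refine ⟨a1.symm, Or.inr ⟨?_, ?_⟩⟩
    · rw [eMin_mk, eMin_mk, min_eq_left h12.le, min_eq_left h1v.le]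
    · rw [eMax_mk, eMax_mk, max_eq_right h12.le, max_eq_right h1v.le]
      exact h2v
  have adj2 : (gtSubgraph G s(u1,u2)).Adj v u2 := by
    refine ⟨a2, Or.inl ?_⟩
    rw [eMin_mk, eMin_mk, min_eq_left h12.le, min_eq_right h2v.le]
    exact h12
  exact adj1.reachable.trans adj2.reachable

lemma edge_facts {G : SimpleGraph (Fin n)} {e : Sym2 (Fin n)} (he : e ∈ G.edgeSet) :
    eMin e < eMax e ∧ G.Adj (eMax e) (eMin e) := by
  have hadj : G.Adj (eMin e) (eMax e) := by
    rw [← SimpleGraph.mem_edgeSet, sym2_eq]; exact he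
  exact ⟨(eMin_le_eMax e).lt_of_ne hadj.ne, hadj.symm⟩

lemma exists_lt_adj {G : SimpleGraph (Fin (n+1))} (hT : G.IsTree)
    (h1 : ∀ v : Fin (n+1), ∀ u1 u2, G.Adj v u1 → u1 < v → G.Adj v u2 → u2 < v → u1 = u2) :
    ∀ v : Fin (n+1), v ≠ 0 → ∃ u, G.Adj v u ∧ u < v := by
  classical
  have hS : G.edgeFinset.card = n := by
    have := hT.card_edgeFinset
    rw [Fintype.card_fin] at this
    omega
  have hinj : Set.InjOn eMax (G.edgeFinset : Set (Sym2 (Fin (n+1)))) := by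
    intro e1 he1 e2 he2 heq
    rw [Finset.mem_coe, SimpleGraph.mem_edgeFinset] at he1 he2
    obtain ⟨hl1, ha1⟩ := edge_facts he1
    obtain ⟨hl2, ha2⟩ := edge_facts he2
    rw [heq] at hl1 ha1
    have hmin : eMin e1 = eMin e2 := h1 (eMax e2) _ _ ha1 hl1 ha2 hl2
    rw [← sym2_eq e1, ← sym2_eq e2, hmin, heq]
  have himg : G.edgeFinset.image eMax ⊆ Finset.univ.erase 0 := by
    intro v hv
    rw [Finset.mem_image] at hv
    obtain ⟨e, he, rfl⟩ := hv
    rw [SimpleGraph.mem_edgeFinset] at he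
    refine Finset.mem_erase.mpr ⟨?_, Finset.mem_univ _⟩
    intro h0
    have := (edge_facts he).1
    rw [h0] at this
    exact absurd this (not_lt.mpr (Fin.zero_le _))
  have hcards : (Finset.univ.erase (0 : Fin (n+1))).card ≤ (G.edgeFinset.image eMax).card := by
    rw [Finset.card_image_of_injOn hinj, hS, Finset.card_erase_of_mem (Finset.mem_univ _),
      Finset.card_univ, Fintype.card_fin]
    omega
  have heq : G.edgeFinset.image eMax = Finset.univ.erase 0 :=
    Finset.eq_of_subset_of_card_le himg hcards
  intro v hv
  have hvmem : v ∈ G.edgeFinset.image eMax := by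
    rw [heq]; exact Finset.mem_erase.mpr ⟨hv, Finset.mem_univ _⟩
  rw [Finset.mem_image] at hvmem
  obtain ⟨e, he, rfl⟩ := hvmem
  rw [SimpleGraph.mem_edgeFinset] at he
  exact ⟨eMin e, (edge_facts he).2, (edge_facts he).1⟩

lemma no_active_increasing {G : SimpleGraph (Fin (n+1))} (hG : G.Connected)
    (hE : ¬ ∃ e, ExtActive G e) : IncreasingTree G := by
  push_neg at hE
  have h1 : ∀ v : Fin (n+1), ∀ u1 u2, G.Adj v u1 → u1 < v → G.Adj v u2 → u2 < v → u1 = u2 := by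
    intro v u1 u2 a1 l1 a2 l2
    by_contra hne
    rcases (Ne.lt_or_gt hne) with h12 | h21
    · exact hE _ (two_smaller_active a1 a2 h12 l2)
    · exact hE _ (two_smaller_active a2 a1 h21 l1)
  have hacyc : G.IsAcyclic := by
    intro v c hc
    obtain ⟨e, he⟩ := cycle_active hc
    exact hE e he
  refine ⟨⟨hG, hacyc⟩, ?_⟩
  intro v hv
  obtain ⟨u, hu⟩ := exists_lt_adj ⟨hG, hacyc⟩ h1 v hv
  exact ⟨u, hu, fun u' hu' => h1 v u' u hu'.1 hu'.2 hu.1 hu.2⟩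

lemma increasing_tree_no_active {G : SimpleGraph (Fin (n+1))}
    (hI : IncreasingTree G) (e : Sym2 (Fin (n+1))) : ¬ ExtActive G e := by
  apply increasing_no_active
  intro v u1 u2 a1 l1 a2 l2
  have hv : v ≠ 0 := by
    intro h0; rw [h0] at l1; exact absurd l1 (not_lt.mpr (Fin.zero_le _))
  obtain ⟨u, -, hun⟩ := hI.2 v hv
  rw [hun u1 ⟨a1, l1⟩, hun u2 ⟨a2, l2⟩]

end Bernardi

open Bernardi

/-- Bernardi's involution: the map `Ψ` which sends a connected graph `G` with
an externally active edge to `G ⊕ η_G`, where `η_G` is the lexicographically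
maximal externally active edge, and fixes `G` otherwise, maps connected graphs
to connected graphs, is an involution on them, and its fixed points are
exactly the increasing trees. -/
theorem bernardi_involution (m : ℕ)
    (Ψ : SimpleGraph (Fin (m + 1)) → SimpleGraph (Fin (m + 1)))
    (hact : ∀ G : SimpleGraph (Fin (m + 1)), G.Connected →
      (∃ e, ExtActive G e) →
      ∃ η, ExtActive G η ∧ (∀ f, ExtActive G f → f = η ∨ edgeLt f η) ∧
        Ψ G = oplus G η)
    (hfix : ∀ G : SimpleGraph (Fin (m + 1)), G.Connected →
      ¬ (∃ e, ExtActive G e) → Ψ G = G) :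
    ∀ G : SimpleGraph (Fin (m + 1)), G.Connected →
      (Ψ G).Connected ∧ Ψ (Ψ G) = G ∧ (Ψ G = G ↔ IncreasingTree G) := by
  intro G hG
  by_cases hE : ∃ e, ExtActive G e
  · obtain ⟨η, hηa, hηmax, hΨ⟩ := hact G hG hE
    have hηdiag : ¬ η.IsDiag := by
      obtain ⟨x, y, rfl, hne, -⟩ := hηa
      simpa using hne
    have hconn' : (oplus G η).Connected := conn_oplus hG hηa
    have hgt : gtSubgraph (oplus G η) η = gtSubgraph G η := gt_oplus (edgeLt_irrefl η)
    have hηa' : ExtActive (oplus G η) η := (extActive_congr hgt).mpr hηa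
    have hmax' : ∀ f, ExtActive (oplus G η) f → f = η ∨ edgeLt f η := by
      intro f hf
      by_cases hfη : f = η
      · exact Or.inl hfη
      rcases edgeLt_total hfη with hlt | hgt'
      · exact Or.inr hlt
      · have hnl : ¬ edgeLt f η := edgeLt_asymm hgt'
        have hfG : ExtActive G f := (extActive_congr (gt_oplus hnl)).mp hf
        rcases hηmax f hfG with rfl | h
        · exact Or.inl rfl
        · exact absurd h hnl
    obtain ⟨η₂, h2a, h2max, hΨ2⟩ := hact (oplus G η) hconn' ⟨η, hηa'⟩
    have hηeq : η₂ = η := by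
      rcases hmax' η₂ h2a with h | h
      · exact h
      · rcases h2max η hηa' with h' | h'
        · exact h'.symm
        · exact absurd h (edgeLt_asymm h')
    have hΨΨ : Ψ (Ψ G) = G := by
      rw [hΨ, hΨ2, hηeq, oplus_oplus hηdiag]
    have hΨne : Ψ G ≠ G := by
      rw [hΨ]
      intro hcontra
      have hes := congrArg SimpleGraph.edgeSet hcontra
      rw [edgeSet_oplus hηdiag] at hes
      have hmem : η ∈ symmDiff G.edgeSet {η} ↔ η ∈ G.edgeSet := by rw [hes]
      rw [Set.mem_symmDiff] at hmem
      simp only [Set.mem_singleton_iff] at hmem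
      tauto
    refine ⟨?_, hΨΨ, ?_⟩
    · rw [hΨ]; exact hconn'
    · constructor
      · intro h; exact absurd h hΨne
      · intro hI
        exact absurd hE (by
          rintro ⟨e, he⟩
          exact increasing_tree_no_active hI e he)
  · have hfixG := hfix G hG hE
    have hinc := no_active_increasing hG hE
    rw [hfixG]
    exact ⟨hG, hfixG, iff_of_true rfl hinc⟩
end

section
/- For a matroid M with a total order on its ground set E, the power set 2^E is the disjoint union over all bases B of the intervals [B \ ι(B), B ∪ ε(B)], where ε(B) is the set of externally active elements and ι(B) the set of internally active elements of B. -/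
open scoped Classical

/-- For a matroid `M` with a totally ordered ground set and a basis `B`, the
set of externally active elements of `B`: elements `e ∈ E \ B` depending on
(in the closure of) the elements of `B` larger than `e`. -/
def extActive {α : Type*} [LinearOrder α] (M : Matroid α) (B : Set α) : Set α :=
  {e | e ∈ M.E \ B ∧ e ∈ M.closure {f | f ∈ B ∧ e < f}}

/-- The set of internally active elements of a basis `B`: elements `e ∈ B`
externally active on `E \ B` in the dual matroid. -/
def intActive {α : Type*} [LinearOrder α] (M : Matroid α) (B : Set α) : Set α :=
  {e | e ∈ B ∧ e ∈ M✶.closure {f | f ∈ M.E \ B ∧ e < f}}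

namespace BjoernerPartition

open Set Matroid

variable {α : Type*} [LinearOrder α]

/-! ### An auxiliary strict order

Given `A ⊆ E`, we order the ground set so that elements of `A` are on top
(among themselves in the usual order) and elements outside `A` are below
(among themselves in the reversed order). -/

/-- The auxiliary strict order associated to a set `A`. -/
def rel (A : Set α) (x y : α) : Prop :=
  (x ∉ A ∧ y ∈ A) ∨ (x ∈ A ∧ y ∈ A ∧ x < y) ∨ (x ∉ A ∧ y ∉ A ∧ y < x)

lemma rel_irrefl (A : Set α) (x : α) : ¬ rel A x x := by
  rintro (⟨h1, h2⟩ | ⟨_, _, h⟩ | ⟨_, _, h⟩)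
  · exact h1 h2
  · exact lt_irrefl _ h
  · exact lt_irrefl _ h

lemma rel_trans {A : Set α} {x y z : α} (h1 : rel A x y) (h2 : rel A y z) : rel A x z := by
  rcases h1 with ⟨hx, hy⟩ | ⟨hx, hy, hxy⟩ | ⟨hx, hy, hxy⟩ <;>
  rcases h2 with ⟨hy', hz⟩ | ⟨hy', hz, hyz⟩ | ⟨hy', hz, hyz⟩ <;>
  first
  | exact absurd hy hy'
  | exact absurd hy' hy
  | exact Or.inl ⟨hx, hz⟩
  | exact Or.inr (Or.inl ⟨hx, hz, lt_trans hxy hyz⟩)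
  | exact Or.inr (Or.inr ⟨hx, hz, lt_trans hyz hxy⟩)

lemma rel_total (A : Set α) {x y : α} (h : x ≠ y) : rel A x y ∨ rel A y x := by
  by_cases hx : x ∈ A <;> by_cases hy : y ∈ A
  · rcases h.lt_or_gt with h' | h'
    · exact Or.inl (Or.inr (Or.inl ⟨hx, hy, h'⟩))
    · exact Or.inr (Or.inr (Or.inl ⟨hy, hx, h'⟩))
  · exact Or.inr (Or.inl ⟨hy, hx⟩)
  · exact Or.inl (Or.inl ⟨hx, hy⟩)
  · rcases h.lt_or_gt with h' | h'
    · exact Or.inr (Or.inr (Or.inr ⟨hy, hx, h'⟩))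
    · exact Or.inl (Or.inr (Or.inr ⟨hx, hy, h'⟩))

lemma sum_range_two_pow_lt (n : ℕ) : ∑ i ∈ Finset.range n, 2 ^ i < 2 ^ n := by
  induction n with
  | zero => simp
  | succ n ih =>
    rw [Finset.sum_range_succ, pow_succ]
    omega

/-! ### Existence of a greedy basis -/

/-- For any strict total order `r`, a finite matroid has a basis `B` such that every
element outside `B` is spanned by the elements of `B` above it. -/
lemma exists_greedy_base (M : Matroid α) (hE : M.E.Finite) (r : α → α → Prop)
    (hirr : ∀ x, ¬ r x x) (htr : ∀ {x y z}, r x y → r y z → r x z)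
    (htot : ∀ x y, x ≠ y → r x y ∨ r y x) :
    ∃ B, M.IsBase B ∧ ∀ e ∈ M.E, e ∉ B → e ∈ M.closure {f | f ∈ B ∧ r e f} := by
  classical
  set Ef : Finset α := hE.toFinset with hEfdef
  have hEf : ∀ x, x ∈ Ef ↔ x ∈ M.E := by simp [hEfdef]
  set idx : α → ℕ := fun x => (Ef.filter (fun z => r z x)).card with hidxdef
  have hidx_lt : ∀ {x y : α}, x ∈ M.E → r x y → idx x < idx y := by
    intro x y hx hxy
    have hsub : Ef.filter (fun z => r z x) ⊆ Ef.filter (fun z => r z y) := by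
      intro z hz
      simp only [Finset.mem_filter] at *
      exact ⟨hz.1, htr hz.2 hxy⟩
    have hmem : x ∈ Ef.filter (fun z => r z y) := by
      simp only [Finset.mem_filter]
      exact ⟨(hEf x).2 hx, hxy⟩
    have hnot : x ∉ Ef.filter (fun z => r z x) := by
      simp only [Finset.mem_filter]
      exact fun h => hirr x h.2
    exact Finset.card_lt_card ((Finset.ssubset_iff_of_subset hsub).2 ⟨x, hmem, hnot⟩)
  -- an opaque "filter" function, to avoid decidability-instance mismatches
  obtain ⟨flt, hflt⟩ : ∃ flt : Set α → Finset α,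
      ∀ (B : Set α) (x : α), x ∈ flt B ↔ x ∈ Ef ∧ x ∈ B :=
    ⟨fun B => Ef.filter (· ∈ B), fun B x => by simp [Finset.mem_filter]⟩
  set w : Set α → ℕ := fun B => ∑ x ∈ flt B, 2 ^ idx x with hwdef
  have hwmono : ∀ {B C : Set α}, B ⊆ C → w B ≤ w C := by
    intro B C h
    apply Finset.sum_le_sum_of_subset
    intro x hx
    rw [hflt] at *
    exact ⟨hx.1, h hx.2⟩
  have hbdd : ∀ B, w B ≤ ∑ x ∈ Ef, 2 ^ idx x := by
    intro B
    apply Finset.sum_le_sum_of_subset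
    intro x hx
    exact ((hflt B x).1 hx).1
  have hne : {n | ∃ B, M.IsBase B ∧ w B = n}.Nonempty := by
    obtain ⟨B0, hB0⟩ := M.exists_isBase
    exact ⟨w B0, B0, hB0, rfl⟩
  have hbdd' : BddAbove {n | ∃ B, M.IsBase B ∧ w B = n} := by
    refine ⟨∑ x ∈ Ef, 2 ^ idx x, ?_⟩
    rintro n ⟨B, _, rfl⟩
    exact hbdd B
  obtain ⟨B, hB, hwB⟩ := Nat.sSup_mem hne hbdd'
  have hmax : ∀ B', M.IsBase B' → w B' ≤ w B := by
    intro B' hB'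
    rw [hwB]
    exact le_csSup hbdd' ⟨B', hB', rfl⟩
  refine ⟨B, hB, ?_⟩
  intro e heE heB
  by_contra hecl
  set S : Set α := {f | f ∈ B ∧ r e f} with hSdef
  have hSB : S ⊆ B := fun x hx => hx.1
  have hSi : M.Indep S := hB.indep.subset hSB
  have heS : e ∉ S := fun h => heB (hSB h)
  have hins : M.Indep (insert e S) := (hSi.insert_indep_iff_of_notMem heS).2 ⟨heE, hecl⟩
  obtain ⟨B', hB', hsub⟩ := hins.exists_isBase_superset
  -- weight comparison
  have hdisj : Disjoint (flt S) (flt (B \ S)) := by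
    rw [Finset.disjoint_left]
    intro a ha hb
    rw [hflt] at ha hb
    exact hb.2.2 ha.2
  have hBsplit : flt B = flt S ∪ flt (B \ S) := by
    ext x
    simp only [Finset.mem_union, hflt, Set.mem_diff]
    constructor
    · rintro ⟨hx, hxB⟩
      by_cases hxS : x ∈ S
      · exact Or.inl ⟨hx, hxS⟩
      · exact Or.inr ⟨hx, hxB, hxS⟩
    · rintro (⟨hx, hxS⟩ | ⟨hx, hxB, _⟩)
      · exact ⟨hx, hSB hxS⟩
      · exact ⟨hx, hxB⟩
  have h1 : w B = w S + w (B \ S) := by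
    rw [hwdef]
    beta_reduce
    rw [hBsplit, Finset.sum_union hdisj]
  have hinj : ∀ x ∈ flt (B \ S), ∀ y ∈ flt (B \ S), idx x = idx y → x = y := by
    intro x hx y hy hxy
    by_contra hne'
    rw [hflt] at hx hy
    rcases htot x y hne' with h | h
    · exact absurd hxy (Nat.ne_of_lt (hidx_lt ((hEf x).1 hx.1) h))
    · exact absurd hxy.symm (Nat.ne_of_lt (hidx_lt ((hEf y).1 hy.1) h))
  have hrxe : ∀ x ∈ flt (B \ S), r x e := by
    intro x hx
    rw [hflt] at hx
    rcases htot x e (fun h => heB (h ▸ hx.2.1)) with h | h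
    · exact h
    · exact absurd ⟨hx.2.1, h⟩ hx.2.2
  have hbound : w (B \ S) < 2 ^ idx e := by
    calc w (B \ S) = ∑ x ∈ flt (B \ S), 2 ^ idx x := by rw [hwdef]
      _ = ∑ i ∈ (flt (B \ S)).image idx, 2 ^ i :=
          (Finset.sum_image hinj).symm
      _ ≤ ∑ i ∈ Finset.range (idx e), 2 ^ i := by
          apply Finset.sum_le_sum_of_subset
          intro i hi
          simp only [Finset.mem_image] at hi
          obtain ⟨x, hx, rfl⟩ := hi
          have hxE : x ∈ M.E := (hEf x).1 ((hflt _ x).1 hx).1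
          exact Finset.mem_range.2 (hidx_lt hxE (hrxe x hx))
      _ < 2 ^ idx e := sum_range_two_pow_lt _
  have hwins : w (insert e S) = 2 ^ idx e + w S := by
    have hfins : flt (insert e S) = insert e (flt S) := by
      ext x
      simp only [Finset.mem_insert, hflt, Set.mem_insert_iff]
      constructor
      · rintro ⟨hx, h | h⟩
        · exact Or.inl h
        · exact Or.inr ⟨hx, h⟩
      · rintro (rfl | ⟨hx, h⟩)
        · exact ⟨(hEf x).2 heE, Or.inl rfl⟩
        · exact ⟨hx, Or.inr h⟩
    have heSf : e ∉ flt S := fun h => heS ((hflt S e).1 h).2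
    rw [hwdef]
    beta_reduce
    rw [hfins, Finset.sum_insert heSf]
  have hlt : w B < w B' := by
    have h2 : w (insert e S) ≤ w B' := hwmono hsub
    rw [hwins] at h2
    omega
  exact absurd (hmax B' hB') (not_le.2 hlt)

/-! ### Existence -/

lemma exists_good_base (M : Matroid α) (hE : M.E.Finite) (A : Set α) (hA : A ⊆ M.E) :
    ∃ B, M.IsBase B ∧ B \ intActive M B ⊆ A ∧ A ⊆ B ∪ extActive M B := by
  obtain ⟨B, hB, hgr⟩ := exists_greedy_base M hE (rel A) (rel_irrefl A)
    (fun h1 h2 => rel_trans h1 h2) (fun x y h => rel_total A h)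
  refine ⟨B, hB, ?_, ?_⟩
  · -- internal part
    rintro b ⟨hbB, hbι⟩
    by_contra hbA
    apply hbι
    set X : Set α := {f | f ∈ M.E \ B ∧ b < f} with hXdef
    have hbE : b ∈ M.E := hB.subset_ground hbB
    have hXsub : X ⊆ M.E \ B := fun x hx => hx.1
    have hXi : M✶.Indep X := hB.compl_isBase_dual.indep.subset hXsub
    have hbX : b ∉ X := fun h => h.1.2 hbB
    have hbgrnd : insert b X ⊆ M.E := insert_subset hbE fun x hx => (hXsub hx).1
    -- the complement of `insert b X` is contained in the closure of `B \ {b}`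
    have hcompl : M.E \ insert b X ⊆ M.closure (B \ {b}) := by
      rintro y ⟨hyE, hy⟩
      simp only [mem_insert_iff, not_or] at hy
      obtain ⟨hyb, hyX⟩ := hy
      by_cases hyB : y ∈ B
      · exact M.subset_closure (B \ {b}) (fun z hz => hB.subset_ground hz.1) ⟨hyB, hyb⟩
      · have h1 : y ∈ M.closure {f | f ∈ B ∧ rel A y f} := hgr y hyE hyB
        have h2 : {f | f ∈ B ∧ rel A y f} ⊆ B \ {b} := by
          rintro f ⟨hfB, hf⟩
          refine ⟨hfB, fun hfb => ?_⟩
          have hfb' : f = b := hfb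
          rw [hfb'] at hf
          have hby : ¬ b < y := fun hlt => hyX ⟨⟨hyE, hyB⟩, hlt⟩
          rcases hf with ⟨_, hbA'⟩ | ⟨_, hbA', _⟩ | ⟨_, _, hlt⟩
          · exact hbA hbA'
          · exact hbA hbA'
          · exact hby hlt
        exact M.closure_subset_closure h2 h1
    -- hence `insert b X` is dependent in the dual
    have hdep : M✶.Dep (insert b X) := by
      rw [Matroid.dep_iff]
      refine ⟨fun hco : M.Coindep (insert b X) => ?_, hbgrnd⟩
      have hsp := hco.compl_spanning
      have hcl : M.E ⊆ M.closure (B \ {b}) := by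
        rw [← hsp.closure_eq]
        calc M.closure (M.E \ insert b X) ⊆ M.closure (M.closure (B \ {b})) :=
              M.closure_subset_closure hcompl
          _ = M.closure (B \ {b}) := M.closure_closure _
      exact hB.indep.notMem_closure_diff_of_mem hbB (hcl hbE)
    exact ⟨hbB, (hXi.mem_closure_iff).2 (Or.inl hdep)⟩
  · -- external part
    intro a haA
    by_cases haB : a ∈ B
    · exact Or.inl haB
    · right
      have haE : a ∈ M.E := hA haA
      have h1 : a ∈ M.closure {f | f ∈ B ∧ rel A a f} := hgr a haE haB
      have h2 : {f | f ∈ B ∧ rel A a f} ⊆ {f | f ∈ B ∧ a < f} := by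
        rintro f ⟨hfB, hf⟩
        refine ⟨hfB, ?_⟩
        rcases hf with ⟨haA', _⟩ | ⟨_, _, hlt⟩ | ⟨haA', _, _⟩
        · exact absurd haA haA'
        · exact hlt
        · exact absurd haA haA'
      exact ⟨⟨haE, haB⟩, M.closure_subset_closure h2 h1⟩

/-! ### Uniqueness -/

/-- The key lemma for uniqueness: two bases whose intervals both contain `A`
cannot differ at an element of `A`. -/
lemma key (M : Matroid α) (hE : M.E.Finite) {A B₁ B₂ : Set α}
    (hB₁ : M.IsBase B₁) (hB₂ : M.IsBase B₂)
    (h₁e : A ⊆ B₁ ∪ extActive M B₁)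
    (h₂e : A ⊆ B₂ ∪ extActive M B₂) (h₂i : B₂ \ intActive M B₂ ⊆ A)
    {e : α} (he1 : e ∈ B₁) (he2 : e ∉ B₂) (heA : e ∈ A) : False := by
  classical
  have heε : e ∈ extActive M B₂ := by
    rcases h₂e heA with h | h
    · exact absurd h he2
    · exact h
  obtain ⟨⟨heE, _⟩, hecl⟩ := heε
  set S₂ : Set α := {f | f ∈ B₂ ∧ e < f} with hS₂def
  have hS₂E : S₂ ⊆ M.E := fun x hx => hB₂.subset_ground hx.1
  have hS₂fin : S₂.Finite := hE.subset hS₂E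
  set H : Set α := M.closure (B₁ \ {e}) with hHdef
  have heH : e ∉ H := hB₁.indep.notMem_closure_diff_of_mem he1
  -- choose a minimal subset of `S₂` whose closure contains `e`
  set cands : Set ℕ :=
    {n | ∃ T : Finset α, (↑T ⊆ S₂ ∧ e ∈ M.closure ↑T) ∧ T.card = n} with hcandsdef
  have hcne : cands.Nonempty := by
    refine ⟨hS₂fin.toFinset.card, hS₂fin.toFinset, ⟨?_, ?_⟩, rfl⟩
    · rw [Set.Finite.coe_toFinset]
    · rwa [Set.Finite.coe_toFinset]
  obtain ⟨T, ⟨hTS, hTcl⟩, hTcard⟩ := Nat.sInf_mem hcne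
  have hmin : ∀ c ∈ T, e ∉ M.closure (↑(T.erase c) : Set α) := by
    intro c hc hecl'
    have hmem : (T.erase c).card ∈ cands := by
      refine ⟨T.erase c, ⟨?_, hecl'⟩, rfl⟩
      rw [Finset.coe_erase]
      exact (Set.diff_subset).trans hTS
    have h2 := Nat.sInf_le hmem
    rw [Finset.card_erase_of_mem hc] at h2
    have h3 : 0 < T.card := Finset.card_pos.2 ⟨c, hc⟩
    omega
  have hTH : ¬ (↑T : Set α) ⊆ H := by
    intro h
    apply heH
    have := M.closure_subset_closure h hTcl
    rwa [hHdef, M.closure_closure] at this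
  obtain ⟨c, hcT, hcH⟩ := not_subset.1 hTH
  have hcS₂ : c ∈ S₂ := hTS hcT
  obtain ⟨hcB₂, hec⟩ := hcS₂
  have hcB₁ : c ∉ B₁ := by
    intro h
    exact hcH (M.subset_closure (B₁ \ {e}) (fun z hz => hB₁.subset_ground hz.1)
      ⟨h, fun h' => absurd (h' ▸ hec) (lt_irrefl e)⟩)
  have hcE : c ∈ M.E := hB₂.subset_ground hcB₂
  -- closure exchange: `c` is in the closure of `(T \ {c}) ∪ {e}`
  have hxch : c ∈ M.closure (insert e (↑(T.erase c) : Set α)) := by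
    have h1 : e ∈ M.closure (insert c (↑(T.erase c) : Set α)) := by
      rwa [Finset.coe_erase, Set.insert_diff_singleton, Set.insert_eq_of_mem hcT]
    exact (Matroid.closure_exchange ⟨h1, hmin c hcT⟩).1
  by_cases hcA : c ∈ A
  · -- `c` is externally active on `B₁`, hence in `H`, contradiction
    have hcε : c ∈ extActive M B₁ := by
      rcases h₁e hcA with h | h
      · exact absurd h hcB₁
      · exact h
    obtain ⟨_, hccl⟩ := hcε
    apply hcH
    have hsub : {f | f ∈ B₁ ∧ c < f} ⊆ B₁ \ {e} := by
      rintro f ⟨hfB, hcf⟩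
      exact ⟨hfB, fun h' => absurd (h' ▸ (hec.trans hcf)) (lt_irrefl e)⟩
    exact M.closure_subset_closure hsub hccl
  · -- `c` is internally active on `B₂`, contradiction via spanning
    have hcι : c ∈ intActive M B₂ := by
      by_contra h
      exact hcA (h₂i ⟨hcB₂, h⟩)
    obtain ⟨_, hccl⟩ := hcι
    set X₂ : Set α := {f | f ∈ M.E \ B₂ ∧ c < f} with hX₂def
    have hX₂sub : X₂ ⊆ M.E \ B₂ := fun x hx => hx.1
    have hX₂i : M✶.Indep X₂ := hB₂.compl_isBase_dual.indep.subset hX₂sub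
    have hcX₂ : c ∉ X₂ := fun h => h.1.2 hcB₂
    have hdep : M✶.Dep (insert c X₂) := by
      rcases (hX₂i.mem_closure_iff).1 hccl with h | h
      · exact h
      · exact absurd h hcX₂
    have hni : ¬ M✶.Indep (insert c X₂) := (Matroid.dep_iff.1 hdep).1
    apply hni
    have hgrnd : insert c X₂ ⊆ M.E := insert_subset hcE fun x hx => (hX₂sub hx).1
    have hY : (B₂ \ {c}) ∪ {e} ⊆ M.E \ insert c X₂ := by
      intro y hy
      rcases hy with ⟨hyB, hyc⟩ | hye
      · refine ⟨hB₂.subset_ground hyB, ?_⟩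
        simp only [mem_insert_iff, not_or]
        exact ⟨hyc, fun h => h.1.2 hyB⟩
      · rw [show y = e from hye]
        refine ⟨heE, ?_⟩
        simp only [mem_insert_iff, not_or]
        constructor
        · intro h
          rw [h] at hec
          exact lt_irrefl c hec
        · intro h
          exact lt_irrefl e (hec.trans h.2)
    have hcY : c ∈ M.closure (M.E \ insert c X₂) := by
      apply M.closure_subset_closure (show insert e (↑(T.erase c) : Set α) ⊆ M.E \ insert c X₂
        from ?_) hxch
      intro y hy'
      rcases Set.mem_insert_iff.1 hy' with hye | hy
      · rw [show y = e from hye]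
        exact hY (Or.inr rfl)
      · rw [Finset.coe_erase] at hy
        obtain ⟨hyT, hyc⟩ := hy
        exact hY (Or.inl ⟨(hTS hyT).1, hyc⟩)
    have hsp : M.Spanning (M.E \ insert c X₂) := by
      rw [Matroid.spanning_iff_closure_eq diff_subset]
      refine subset_antisymm (M.closure_subset_ground _) ?_
      have hB₂cl : B₂ ⊆ M.closure (M.E \ insert c X₂) := by
        intro b hbB
        by_cases hbc : b = c
        · exact hbc ▸ hcY
        · exact M.subset_closure _ diff_subset (hY (Or.inl ⟨hbB, hbc⟩))
      calc M.E = M.closure B₂ := hB₂.closure_eq.symm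
        _ ⊆ M.closure (M.closure (M.E \ insert c X₂)) := M.closure_subset_closure hB₂cl
        _ = M.closure (M.E \ insert c X₂) := M.closure_closure _
    exact (Matroid.coindep_iff_compl_spanning hgrnd).2 hsp

/-! ### Duality transfer -/

lemma extActive_dual (M : Matroid α) {B : Set α} (hB : B ⊆ M.E) :
    extActive M✶ (M.E \ B) = intActive M B := by
  unfold extActive intActive
  have h1 : M✶.E \ (M.E \ B) = B := by
    rw [Matroid.dual_ground]
    exact Set.diff_diff_cancel_left hB
  simp only [h1]

lemma intActive_dual (M : Matroid α) {B : Set α} (hB : B ⊆ M.E) :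
    intActive M✶ (M.E \ B) = extActive M B := by
  unfold intActive extActive
  have h1 : M✶.E \ (M.E \ B) = B := by
    rw [Matroid.dual_ground]
    exact Set.diff_diff_cancel_left hB
  rw [Matroid.dual_dual]
  simp only [h1]

lemma cond_dual (M : Matroid α) {A B : Set α} (hB : M.IsBase B)
    (h1 : B \ intActive M B ⊆ A) (h2 : A ⊆ B ∪ extActive M B) :
    ((M.E \ B) \ intActive M✶ (M.E \ B) ⊆ M.E \ A) ∧
      (M.E \ A ⊆ (M.E \ B) ∪ extActive M✶ (M.E \ B)) := by
  rw [intActive_dual M hB.subset_ground, extActive_dual M hB.subset_ground]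
  constructor
  · rintro x ⟨⟨hxE, hxB⟩, hxε⟩
    refine ⟨hxE, fun hxA => hxε ?_⟩
    rcases h2 hxA with h | h
    · exact absurd h hxB
    · exact h
  · rintro x ⟨hxE, hxA⟩
    by_cases hxB : x ∈ B
    · right
      by_contra h
      exact hxA (h1 ⟨hxB, h⟩)
    · exact Or.inl ⟨hxE, hxB⟩

end BjoernerPartition

open BjoernerPartition Set

/-- Björner's partition: the power set of the ground set of a matroid is the
disjoint union, over all bases `B`, of the intervals
`[B \ ι(B), B ∪ ε(B)]`; i.e. every subset `A` of the ground set lies in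
exactly one such interval. -/
theorem matroid_partition {α : Type*} [LinearOrder α] (M : Matroid α)
    [M.Finite] (A : Set α) (hA : A ⊆ M.E) :
    ∃! B : Set α, M.IsBase B ∧ B \ intActive M B ⊆ A ∧ A ⊆ B ∪ extActive M B := by
  have hE : M.E.Finite := M.ground_finite
  obtain ⟨B, hB, h1, h2⟩ := exists_good_base M hE A hA
  refine ⟨B, ⟨hB, h1, h2⟩, ?_⟩
  rintro B' ⟨hB', h1', h2'⟩
  by_contra hne
  obtain ⟨e, he⟩ : ∃ e, ¬ (e ∈ B' ↔ e ∈ B) := by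
    by_contra h
    push_neg at h
    exact hne (Set.ext fun x => h x)
  have hE' : M✶.E.Finite := by rwa [Matroid.dual_ground]
  have hAc : M.E \ A ⊆ M✶.E := by rw [Matroid.dual_ground]; exact diff_subset
  have hcases : (e ∈ B' ∧ e ∉ B) ∨ (e ∈ B ∧ e ∉ B') := by tauto
  rcases hcases with ⟨heB', heB⟩ | ⟨heB, heB'⟩
  · by_cases heA : e ∈ A
    · exact key M hE hB' hB h2' h2 h1 heB' heB heA
    · -- dualize
      obtain ⟨hd1, hd2⟩ := cond_dual M hB h1 h2
      obtain ⟨hd1', hd2'⟩ := cond_dual M hB' h1' h2'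
      exact key M✶ hE' hB.compl_isBase_dual hB'.compl_isBase_dual hd2 hd2' hd1'
        ⟨hB'.subset_ground heB', heB⟩ (fun h => h.2 heB')
        ⟨hB'.subset_ground heB', heA⟩
  · by_cases heA : e ∈ A
    · exact key M hE hB hB' h2 h2' h1' heB heB' heA
    · obtain ⟨hd1, hd2⟩ := cond_dual M hB h1 h2
      obtain ⟨hd1', hd2'⟩ := cond_dual M hB' h1' h2'
      exact key M✶ hE' hB'.compl_isBase_dual hB.compl_isBase_dual hd2' hd2 hd1
        ⟨hB.subset_ground heB, heB'⟩ (fun h => h.2 heB)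
        ⟨hB.subset_ground heB, heA⟩
end
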